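/- For every μ ∈ R and every G ∈ R[[q]]: 𝒟'(Ψ_μ(G)) − Ψ_μ(𝒟(G)) = μ·E₄·((X+1)·G − (1/12)·ℱ(G)). (This is the paper's identity ψ²𝒟ψ⁻²·Ψ(μ) − Ψ(μ)·𝒟 = μ·E₄·((k+1) − ℱ/12), conjugated by q^{k/2}.) -/

import Mathlib

open PowerSeries

noncomputable section

/-- `sigma' j n = ∑_{d ∣ n} d^j`. -/
def sigma' (j n : ℕ) : ℕ := ∑ d ∈ n.divisors, d ^ j

/-- The Eisenstein series `E₂ = 1 − 24∑σ₁(n)qⁿ`. -/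
def E2 : PowerSeries ℚ :=
  PowerSeries.mk fun n => if n = 0 then 1 else -24 * (sigma' 1 n : ℚ)

/-- The Eisenstein series `E₄ = 1 + 240∑σ₃(n)qⁿ`. -/
def E4 : PowerSeries ℚ :=
  PowerSeries.mk fun n => if n = 0 then 1 else 240 * (sigma' 3 n : ℚ)

/-- The Eisenstein series `E₆ = 1 − 504∑σ₅(n)qⁿ`. -/
def E6 : PowerSeries ℚ :=
  PowerSeries.mk fun n => if n = 0 then 1 else -504 * (sigma' 5 n : ℚ)

/-- The discriminant `Δ = (E₄³ − E₆²)/1728`. -/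
def Δ' : PowerSeries ℚ := PowerSeries.C (R := ℚ) (1/1728) * (E4 ^ 3 - E6 ^ 2)

/-- The derivation `D(f) = q·df/dq`. -/
def Dq {R : Type*} [Semiring R] (f : PowerSeries R) : PowerSeries R :=
  PowerSeries.mk fun n => (n : R) * PowerSeries.coeff (R := R) n f

/-- `μ_0 = −1` and `μ_k = 12(6k+1)(6k+5)/(k(k+1))` for `k ≥ 1`. -/
def μ (k : ℕ) : ℚ :=
  if k = 0 then -1 else 12 * (6*(k:ℚ)+1) * (6*(k:ℚ)+5) / ((k:ℚ)*((k:ℚ)+1))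

/-- `μ*_0 = −1` and `μ*_k = 12(6k−1)(6k+7)/(k(k+1))` for `k ≥ 1`. -/
def μs (k : ℕ) : ℚ :=
  if k = 0 then -1 else 12 * (6*(k:ℚ)-1) * (6*(k:ℚ)+7) / ((k:ℚ)*((k:ℚ)+1))

/-- `g k` is the q-expansion of the Kaneko–Koike extremal quasimodular form `f_{1,6k}`:
`g 0 = 1`, `g 1 = D(E₄)/240`, `g (k+2) = E₆·g(k+1) + μ_k·Δ·g(k)`. -/
def g : ℕ → PowerSeries ℚ
  | 0 => 1
  | 1 => PowerSeries.C (R := ℚ) (1/240) * Dq E4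
  | (k+2) => E6 * g (k+1) + PowerSeries.C (R := ℚ) (μ k) * (Δ' * g k)

/-- `h k` is the q-expansion of the extremal quasimodular form `f_{1,6k+2}`:
`h 0 = E₂`, `h 1 = −D(E₆)/504`, `h (k+2) = E₆·h(k+1) + μ*_k·Δ·h(k)`. -/
def h : ℕ → PowerSeries ℚ
  | 0 => E2
  | 1 => PowerSeries.C (R := ℚ) (-(1/504)) * Dq E6
  | (k+2) => E6 * h (k+1) + PowerSeries.C (R := ℚ) (μs k) * (Δ' * h k)

end

noncomputable section

/-- The inclusion `ℚ[[q]] ⊆ R[[q]]` where `R = RatFunc ℚ`. -/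
def ι : PowerSeries ℚ →+* PowerSeries (RatFunc ℚ) :=
  PowerSeries.map (algebraMap ℚ (RatFunc ℚ))

/-- Multiplication by the constant power series `X ∈ R`. -/
def Xc : PowerSeries (RatFunc ℚ) := PowerSeries.C (R := RatFunc ℚ) RatFunc.X

/-- The operator `𝒟(G) = D²(G) + X·D(G) + ((X²/4)·(1−E₄) + 144·Δ·E₄⁻²)·G`. -/
def Dcal (G : PowerSeries (RatFunc ℚ)) : PowerSeries (RatFunc ℚ) :=
  Dq (Dq G) + Xc * Dq G +
    (PowerSeries.C (R := RatFunc ℚ) (RatFunc.X^2/4) * (1 - ι E4)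
      + ι (PowerSeries.C (R := ℚ) 144 * Δ' * (E4⁻¹)^2)) * G

/-- The operator `𝒟'(G) = D²(G) + X·D(G) + (X²/4 − ((X+2)²/4)·E₄ + 144·Δ·E₄⁻²)·G`. -/
def Dcal' (G : PowerSeries (RatFunc ℚ)) : PowerSeries (RatFunc ℚ) :=
  Dq (Dq G) + Xc * Dq G +
    (PowerSeries.C (R := RatFunc ℚ) (RatFunc.X^2/4)
      - PowerSeries.C (R := RatFunc ℚ) ((RatFunc.X+2)^2/4) * ι E4
      + ι (PowerSeries.C (R := ℚ) 144 * Δ' * (E4⁻¹)^2)) * G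

/-- The coefficientwise ring endomorphism `Ψ` of `R[[q]]` induced by `σ : R → R`. -/
def Ψop (σ : RatFunc ℚ →ₐ[ℚ] RatFunc ℚ) :
    PowerSeries (RatFunc ℚ) →+* PowerSeries (RatFunc ℚ) :=
  PowerSeries.map σ.toRingHom

/-- The operator `ℱ(G) = S⁻¹·(12·E₄·D(Ψ(G)) + (6(X+1)·E₄ + E₂·E₄ + (6X+5)·E₆)·Ψ(G))`. -/
def Fcal (σ : RatFunc ℚ →ₐ[ℚ] RatFunc ℚ) (S : PowerSeries ℚ)
    (G : PowerSeries (RatFunc ℚ)) : PowerSeries (RatFunc ℚ) :=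
  ι S⁻¹ * (PowerSeries.C (R := RatFunc ℚ) 12 * ι E4 * Dq (Ψop σ G)
    + (PowerSeries.C (R := RatFunc ℚ) (6*(RatFunc.X+1)) * ι E4 + ι (E2*E4)
      + PowerSeries.C (R := RatFunc ℚ) (6*RatFunc.X+5) * ι E6) * Ψop σ G)

/-- The operator `Ψ_μ(G) = q·Ψ(Ψ(G)) + μ·(E₆·S⁻¹·Ψ(G) − G)`. -/
def Psimu (σ : RatFunc ℚ →ₐ[ℚ] RatFunc ℚ) (S : PowerSeries ℚ) (m : RatFunc ℚ)
    (G : PowerSeries (RatFunc ℚ)) : PowerSeries (RatFunc ℚ) :=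
  PowerSeries.X * Ψop σ (Ψop σ G)
    + PowerSeries.C (R := RatFunc ℚ) m * (ι E6 * ι S⁻¹ * Ψop σ G - G)

end


noncomputable section
open Finset


variable {R : Type*} [CommRing R]

@[simp] lemma Dq_coeff (f : PowerSeries R) (n : ℕ) : coeff (R := R) n (Dq f) = n * coeff (R := R) n f := by
  simp [Dq]

lemma Dq_zero : Dq (0 : PowerSeries R) = 0 := by
  ext n; simp

lemma Dq_add (f g : PowerSeries R) : Dq (f + g) = Dq f + Dq g := by
  ext n; simp [mul_add]

lemma Dq_mul (f g : PowerSeries R) : Dq (f * g) = Dq f * g + f * Dq g := by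
  ext n
  simp only [Dq_coeff, coeff_mul, map_add, Finset.mul_sum, ← Finset.sum_add_distrib]
  refine Finset.sum_congr rfl fun p hp => ?_
  have h : p.1 + p.2 = n := Finset.HasAntidiagonal.mem_antidiagonal.mp hp
  rw [← h]; push_cast; ring

lemma Dq_C (c : R) : Dq (C (R := R) c) = 0 := by
  ext n; rcases n with _|n <;> simp [coeff_C]

@[simp] lemma Dq_one : Dq (1 : PowerSeries R) = 0 := by
  rw [← map_one (C (R := R))]; exact Dq_C 1

lemma Dq_X : Dq (X : PowerSeries R) = X := by
  ext n; rcases n with _|n <;> simp [coeff_X]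
  rcases n with _|n <;> simp

lemma Dq_sub (f g : PowerSeries R) : Dq (f - g) = Dq f - Dq g := by
  ext n; simp [mul_sub]

lemma Dq_neg (f : PowerSeries R) : Dq (-f) = -Dq f := by
  ext n; simp

lemma Dq_map {S : Type*} [CommRing S] (r : R →+* S) (f : PowerSeries R) :
    Dq (PowerSeries.map r f) = PowerSeries.map r (Dq f) := by
  ext n; simp

lemma Dq_pow (f : PowerSeries R) (k : ℕ) : Dq (f ^ k) = k * f ^ (k-1) * Dq f := by
  induction k with
  | zero => simp
  | succ m ih =>
    rw [pow_succ, Dq_mul, ih]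
    rcases Nat.eq_zero_or_pos m with h|h
    · simp [h]
    · have h2 : m - 1 + 1 = m := Nat.succ_pred_eq_of_pos h
      have h3 : f ^ m = f ^ (m-1) * f := by rw [← pow_succ, h2]
      simp only [Nat.add_sub_cancel]
      rw [h3]
      push_cast
      ring

end

noncomputable section
open Finset



/-- quadruples (a,x,b,y), all ≥ 1, with a*x+b*y = n -/
def TT (n : ℕ) : Finset (ℕ × ℕ × ℕ × ℕ) :=
  ((Finset.Icc 1 n) ×ˢ (Finset.Icc 1 n) ×ˢ (Finset.Icc 1 n) ×ˢ (Finset.Icc 1 n)).filter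
    (fun p => p.1 * p.2.1 + p.2.2.1 * p.2.2.2 = n)

lemma mem_TT {n : ℕ} {p : ℕ × ℕ × ℕ × ℕ} :
    p ∈ TT n ↔ p.1 * p.2.1 + p.2.2.1 * p.2.2.2 = n ∧
      1 ≤ p.1 ∧ 1 ≤ p.2.1 ∧ 1 ≤ p.2.2.1 ∧ 1 ≤ p.2.2.2 := by
  obtain ⟨a, x, b, y⟩ := p
  simp only [TT, Finset.mem_filter, Finset.mem_product, Finset.mem_Icc]
  constructor
  · rintro ⟨⟨⟨h1,h2⟩,⟨h3,h4⟩,⟨h5,h6⟩,⟨h7,h8⟩⟩, he⟩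
    exact ⟨he, h1, h3, h5, h7⟩
  · rintro ⟨he, h1, h3, h5, h7⟩
    have ha : a ≤ a * x := Nat.le_mul_of_pos_right a h3
    have hx : x ≤ a * x := Nat.le_mul_of_pos_left x h1
    have hb : b ≤ b * y := Nat.le_mul_of_pos_right b h7
    have hy : y ≤ b * y := Nat.le_mul_of_pos_left y h5
    exact ⟨⟨⟨h1, by omega⟩, ⟨h3, by omega⟩, ⟨h5, by omega⟩, ⟨h7, by omega⟩⟩, he⟩

def Agt (n : ℕ) : Finset (ℕ × ℕ × ℕ × ℕ) := (TT n).filter (fun p => p.2.2.1 < p.1)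
def Alt (n : ℕ) : Finset (ℕ × ℕ × ℕ × ℕ) := (TT n).filter (fun p => p.1 < p.2.2.1)
def Aeq (n : ℕ) : Finset (ℕ × ℕ × ℕ × ℕ) := (TT n).filter (fun p => p.1 = p.2.2.1)
def Xgt (n : ℕ) : Finset (ℕ × ℕ × ℕ × ℕ) := (TT n).filter (fun p => p.2.2.2 < p.2.1)
def Xlt (n : ℕ) : Finset (ℕ × ℕ × ℕ × ℕ) := (TT n).filter (fun p => p.2.1 < p.2.2.2)
def Xeq (n : ℕ) : Finset (ℕ × ℕ × ℕ × ℕ) := (TT n).filter (fun p => p.2.1 = p.2.2.2)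

/-- moment sum -/
def MS (s : Finset (ℕ × ℕ × ℕ × ℕ)) (i j k l : ℕ) : ℚ :=
  ∑ p ∈ s, (p.1 : ℚ) ^ i * (p.2.1 : ℚ) ^ j * (p.2.2.1 : ℚ) ^ k * (p.2.2.2 : ℚ) ^ l

/-- divisor pair sum -/
def DS (n u v : ℕ) : ℚ := ∑ d ∈ n.divisors, (d : ℚ) ^ u * ((n / d : ℕ) : ℚ) ^ v

/-- the swap (a,x,b,y) ↦ (b,y,a,x) -/
lemma MS_tau (n : ℕ) (P Q : ℕ×ℕ×ℕ×ℕ → Prop) [DecidablePred P] [DecidablePred Q]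
    (hPQ : ∀ p : ℕ×ℕ×ℕ×ℕ, P p ↔ Q (p.2.2.1, p.2.2.2, p.1, p.2.1))
    (i j k l : ℕ) :
    MS ((TT n).filter P) i j k l = MS ((TT n).filter Q) k l i j := by
  refine Finset.sum_nbij' (fun p => (p.2.2.1, p.2.2.2, p.1, p.2.1))
    (fun p => (p.2.2.1, p.2.2.2, p.1, p.2.1)) ?_ ?_ ?_ ?_ ?_
  · rintro ⟨a,x,b,y⟩ hp
    rw [Finset.mem_filter, mem_TT] at hp ⊢
    dsimp only at hp ⊢
    obtain ⟨⟨he,h1,h2,h3,h4⟩, hP⟩ := hp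
    exact ⟨⟨by omega, h3, h4, h1, h2⟩, (hPQ (a,x,b,y)).mp hP⟩
  · rintro ⟨a,x,b,y⟩ hp
    rw [Finset.mem_filter, mem_TT] at hp ⊢
    dsimp only at hp ⊢
    obtain ⟨⟨he,h1,h2,h3,h4⟩, hP⟩ := hp
    exact ⟨⟨by omega, h3, h4, h1, h2⟩, (hPQ (b,y,a,x)).mpr hP⟩
  · rintro ⟨a,x,b,y⟩ _; rfl
  · rintro ⟨a,x,b,y⟩ _; rfl
  · rintro ⟨a,x,b,y⟩ _; dsimp only; ring

lemma MS_tau_gt (n i j k l : ℕ) : MS (Agt n) i j k l = MS (Alt n) k l i j :=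
  MS_tau n (fun p => p.2.2.1 < p.1) (fun p => p.1 < p.2.2.1) (fun _ => Iff.rfl) i j k l

lemma MS_tau_eq (n i j k l : ℕ) : MS (Aeq n) i j k l = MS (Aeq n) k l i j :=
  MS_tau n (fun p => p.1 = p.2.2.1) (fun p => p.1 = p.2.2.1) (fun _ => eq_comm) i j k l

lemma MS_tau_Xgt (n i j k l : ℕ) : MS (Xgt n) i j k l = MS (Xlt n) k l i j :=
  MS_tau n (fun p => p.2.2.2 < p.2.1) (fun p => p.2.1 < p.2.2.2) (fun _ => Iff.rfl) i j k l

lemma MS_tau_Xeq (n i j k l : ℕ) : MS (Xeq n) i j k l = MS (Xeq n) k l i j :=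
  MS_tau n (fun p => p.2.1 = p.2.2.2) (fun p => p.2.1 = p.2.2.2) (fun _ => eq_comm) i j k l

/-- the swap (a,x,b,y) ↦ (x,a,y,b) -/
lemma MS_ups (n : ℕ) (P Q : ℕ×ℕ×ℕ×ℕ → Prop) [DecidablePred P] [DecidablePred Q]
    (hPQ : ∀ p : ℕ×ℕ×ℕ×ℕ, P p ↔ Q (p.2.1, p.1, p.2.2.2, p.2.2.1))
    (i j k l : ℕ) :
    MS ((TT n).filter P) i j k l = MS ((TT n).filter Q) j i l k := by
  refine Finset.sum_nbij' (fun p => (p.2.1, p.1, p.2.2.2, p.2.2.1))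
    (fun p => (p.2.1, p.1, p.2.2.2, p.2.2.1)) ?_ ?_ ?_ ?_ ?_
  · rintro ⟨a,x,b,y⟩ hp
    rw [Finset.mem_filter, mem_TT] at hp ⊢
    dsimp only at hp ⊢
    obtain ⟨⟨he,h1,h2,h3,h4⟩, hP⟩ := hp
    refine ⟨⟨?_, h2, h1, h4, h3⟩, (hPQ (a,x,b,y)).mp hP⟩
    rw [Nat.mul_comm x a, Nat.mul_comm y b]; exact he
  · rintro ⟨a,x,b,y⟩ hp
    rw [Finset.mem_filter, mem_TT] at hp ⊢
    dsimp only at hp ⊢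
    obtain ⟨⟨he,h1,h2,h3,h4⟩, hP⟩ := hp
    refine ⟨⟨?_, h2, h1, h4, h3⟩, (hPQ (x,a,y,b)).mpr hP⟩
    rw [Nat.mul_comm x a, Nat.mul_comm y b]; exact he
  · rintro ⟨a,x,b,y⟩ _; rfl
  · rintro ⟨a,x,b,y⟩ _; rfl
  · rintro ⟨a,x,b,y⟩ _; dsimp only; ring

lemma MS_ups_gt (n i j k l : ℕ) : MS (Agt n) i j k l = MS (Xgt n) j i l k :=
  MS_ups n (fun p => p.2.2.1 < p.1) (fun p => p.2.2.2 < p.2.1) (fun _ => Iff.rfl) i j k l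

lemma MS_ups_lt (n i j k l : ℕ) : MS (Alt n) i j k l = MS (Xlt n) j i l k :=
  MS_ups n (fun p => p.1 < p.2.2.1) (fun p => p.2.1 < p.2.2.2) (fun _ => Iff.rfl) i j k l

lemma MS_ups_eq (n i j k l : ℕ) : MS (Aeq n) i j k l = MS (Xeq n) j i l k :=
  MS_ups n (fun p => p.1 = p.2.2.1) (fun p => p.2.1 = p.2.2.2) (fun _ => Iff.rfl) i j k l

lemma MS_split (n : ℕ) (i j k l : ℕ) (P Q : ℕ×ℕ×ℕ×ℕ → ℕ) :
    MS (TT n) i j k l =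
      MS ((TT n).filter (fun p => Q p < P p)) i j k l
      + MS ((TT n).filter (fun p => P p < Q p)) i j k l
      + MS ((TT n).filter (fun p => P p = Q p)) i j k l := by
  simp only [MS, Finset.sum_filter, ← Finset.sum_add_distrib]
  apply Finset.sum_congr rfl
  intro p _
  rcases lt_trichotomy (P p) (Q p) with h|h|h
  · rw [if_neg (by omega), if_pos h, if_neg (by omega)]; ring
  · rw [if_neg (by omega), if_neg (by omega), if_pos h]; ring
  · rw [if_pos h, if_neg (by omega), if_neg (by omega)]; ring

lemma MS_split_A (n i j k l : ℕ) :
    MS (TT n) i j k l = MS (Agt n) i j k l + MS (Alt n) i j k l + MS (Aeq n) i j k l :=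
  MS_split n i j k l (fun p => p.1) (fun p => p.2.2.1)

lemma MS_split_X (n i j k l : ℕ) :
    MS (TT n) i j k l = MS (Xgt n) i j k l + MS (Xlt n) i j k l + MS (Xeq n) i j k l :=
  MS_split n i j k l (fun p => p.2.1) (fun p => p.2.2.2)

lemma sum_bij_AX (n : ℕ) (f : ℕ × ℕ × ℕ × ℕ → ℚ) :
    ∑ p ∈ Agt n, f p
      = ∑ p ∈ Xlt n, f (p.1 + p.2.2.1, p.2.1, p.2.2.1, p.2.2.2 - p.2.1) := by
  refine Finset.sum_nbij' (fun p => (p.1 - p.2.2.1, p.2.1, p.2.2.1, p.2.2.2 + p.2.1))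
    (fun p => (p.1 + p.2.2.1, p.2.1, p.2.2.1, p.2.2.2 - p.2.1)) ?_ ?_ ?_ ?_ ?_
  · rintro ⟨a,x,b,y⟩ hp
    rw [Agt, Finset.mem_filter, mem_TT] at hp
    rw [Xlt, Finset.mem_filter, mem_TT]
    dsimp only at hp ⊢
    obtain ⟨⟨he,h1,h2,h3,h4⟩, hP⟩ := hp
    have hkey : (a - b) * x + b * (y + x) = n := by
      have hh : b * x ≤ a * x := Nat.mul_le_mul_right x (le_of_lt hP)
      rw [Nat.sub_mul, Nat.mul_add]
      omega
    exact ⟨⟨hkey, by omega, h2, h3, by omega⟩, by omega⟩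
  · rintro ⟨a,x,b,y⟩ hp
    rw [Xlt, Finset.mem_filter, mem_TT] at hp
    rw [Agt, Finset.mem_filter, mem_TT]
    dsimp only at hp ⊢
    obtain ⟨⟨he,h1,h2,h3,h4⟩, hP⟩ := hp
    have hkey : (a + b) * x + b * (y - x) = n := by
      have hh : b * (y - x) + b * x = b * y := by
        rw [← Nat.mul_add]; congr 1; omega
      rw [Nat.add_mul]
      omega
    exact ⟨⟨hkey, by omega, h2, h3, by omega⟩, by omega⟩
  · rintro ⟨a,x,b,y⟩ hp
    rw [Agt, Finset.mem_filter, mem_TT] at hp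
    dsimp only at hp ⊢
    obtain ⟨⟨he,h1,h2,h3,h4⟩, hP⟩ := hp
    have e1 : a - b + b = a := by omega
    have e2 : y + x - x = y := by omega
    rw [e1, e2]
  · rintro ⟨a,x,b,y⟩ hp
    rw [Xlt, Finset.mem_filter, mem_TT] at hp
    dsimp only at hp ⊢
    obtain ⟨⟨he,h1,h2,h3,h4⟩, hP⟩ := hp
    have e1 : a + b - b = a := by omega
    have e2 : y - x + x = y := by omega
    rw [e1, e2]
  · rintro ⟨a,x,b,y⟩ hp
    rw [Agt, Finset.mem_filter, mem_TT] at hp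
    dsimp only at hp ⊢
    obtain ⟨⟨he,h1,h2,h3,h4⟩, hP⟩ := hp
    have e1 : a - b + b = a := by omega
    have e2 : y + x - x = y := by omega
    rw [e1, e2]

lemma sum_diag_A (n : ℕ) (f : ℕ × ℕ × ℕ × ℕ → ℚ) :
    ∑ p ∈ Aeq n, f p
      = ∑ d ∈ n.divisors, ∑ x ∈ Finset.Ico 1 (n / d), f (d, x, d, n / d - x) := by
  rw [Finset.sum_sigma' n.divisors (fun d => Finset.Ico 1 (n / d))
    (fun d x => f (d, x, d, n / d - x))]
  refine (Finset.sum_nbij' (fun q => (q.1, q.2, q.1, n / q.1 - q.2))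
    (fun p => ⟨p.1, p.2.1⟩) ?_ ?_ ?_ ?_ ?_).symm
  · rintro ⟨d, x⟩ hq
    simp only [Finset.mem_sigma, Nat.mem_divisors, Finset.mem_Ico] at hq
    obtain ⟨⟨hdvd, hn0⟩, hx1, hxlt⟩ := hq
    rw [Aeq, Finset.mem_filter, mem_TT]
    dsimp only
    have hd1 : 1 ≤ d := Nat.pos_of_dvd_of_pos hdvd (Nat.pos_of_ne_zero hn0)
    have hmul : d * (n / d) = n := Nat.mul_div_cancel' hdvd
    have hkey : d * x + d * (n / d - x) = n := by
      rw [← Nat.mul_add]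
      have : x + (n / d - x) = n / d := by omega
      rw [this, hmul]
    exact ⟨⟨hkey, hd1, hx1, hd1, by omega⟩, rfl⟩
  · rintro ⟨a, x, b, y⟩ hp
    rw [Aeq, Finset.mem_filter, mem_TT] at hp
    dsimp only at hp ⊢
    obtain ⟨⟨he, h1, h2, h3, h4⟩, hab⟩ := hp
    subst hab
    simp only [Finset.mem_sigma, Nat.mem_divisors, Finset.mem_Ico]
    have he2 : a * (x + y) = n := by rw [Nat.mul_add]; exact he
    have hpos : 0 < a * (x + y) := Nat.mul_pos (by omega) (by omega)
    have hn0 : n ≠ 0 := by omega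
    have hdiv : n / a = x + y := by
      rw [← he2]; exact Nat.mul_div_cancel_left _ (by omega)
    exact ⟨⟨⟨x + y, he2.symm⟩, hn0⟩, h2, by omega⟩
  · rintro ⟨d, x⟩ hq; rfl
  · rintro ⟨a, x, b, y⟩ hp
    rw [Aeq, Finset.mem_filter, mem_TT] at hp
    dsimp only at hp ⊢
    obtain ⟨⟨he, h1, h2, h3, h4⟩, hab⟩ := hp
    subst hab
    have he2 : a * (x + y) = n := by rw [Nat.mul_add]; exact he
    have hdiv : n / a = x + y := by
      rw [← he2]; exact Nat.mul_div_cancel_left _ (by omega)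
    rw [hdiv]
    have : x + y - x = y := by omega
    rw [this]
  · rintro ⟨d, x⟩ hq; rfl

lemma sum_diag_X (n : ℕ) (f : ℕ × ℕ × ℕ × ℕ → ℚ) :
    ∑ p ∈ Xeq n, f p
      = ∑ d ∈ n.divisors, ∑ a ∈ Finset.Ico 1 (n / d), f (a, d, n / d - a, d) := by
  rw [Finset.sum_sigma' n.divisors (fun d => Finset.Ico 1 (n / d))
    (fun d a => f (a, d, n / d - a, d))]
  refine (Finset.sum_nbij' (fun q => (q.2, q.1, n / q.1 - q.2, q.1))
    (fun p => ⟨p.2.1, p.1⟩) ?_ ?_ ?_ ?_ ?_).symm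
  · rintro ⟨d, a⟩ hq
    simp only [Finset.mem_sigma, Nat.mem_divisors, Finset.mem_Ico] at hq
    obtain ⟨⟨hdvd, hn0⟩, ha1, halt⟩ := hq
    rw [Xeq, Finset.mem_filter, mem_TT]
    dsimp only
    have hd1 : 1 ≤ d := Nat.pos_of_dvd_of_pos hdvd (Nat.pos_of_ne_zero hn0)
    have hmul : d * (n / d) = n := Nat.mul_div_cancel' hdvd
    have hkey : a * d + (n / d - a) * d = n := by
      rw [← Nat.add_mul]
      have : a + (n / d - a) = n / d := by omega
      rw [this, Nat.mul_comm, hmul]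
    exact ⟨⟨hkey, ha1, hd1, by omega, hd1⟩, rfl⟩
  · rintro ⟨a, x, b, y⟩ hp
    rw [Xeq, Finset.mem_filter, mem_TT] at hp
    dsimp only at hp ⊢
    obtain ⟨⟨he, h1, h2, h3, h4⟩, hxy⟩ := hp
    subst hxy
    simp only [Finset.mem_sigma, Nat.mem_divisors, Finset.mem_Ico]
    have he2 : (a + b) * x = n := by rw [Nat.add_mul]; exact he
    have hpos : 0 < (a + b) * x := Nat.mul_pos (by omega) (by omega)
    have hn0 : n ≠ 0 := by omega
    have hdiv : n / x = a + b := by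
      rw [← he2, Nat.mul_comm]; exact Nat.mul_div_cancel_left _ (by omega)
    exact ⟨⟨⟨a + b, by rw [← he2]; ring⟩, hn0⟩, h1, by omega⟩
  · rintro ⟨d, a⟩ hq; rfl
  · rintro ⟨a, x, b, y⟩ hp
    rw [Xeq, Finset.mem_filter, mem_TT] at hp
    dsimp only at hp ⊢
    obtain ⟨⟨he, h1, h2, h3, h4⟩, hxy⟩ := hp
    subst hxy
    have he2 : (a + b) * x = n := by rw [Nat.add_mul]; exact he
    have hdiv : n / x = a + b := by
      rw [← he2]; exact Nat.mul_div_cancel _ (by omega)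
    rw [hdiv]
    have : a + b - a = b := by omega
    rw [this]
  · rintro ⟨d, a⟩ hq; rfl

lemma W_eq_MS (n r s : ℕ) (hn : 1 ≤ n) :
    ∑ k ∈ Finset.Ico 1 n, (sigma' r k : ℚ) * (sigma' s (n - k) : ℚ)
      = MS (TT n) r 0 s 0 := by
  have step1 : ∀ k ∈ Finset.Ico 1 n,
      (sigma' r k : ℚ) * (sigma' s (n - k) : ℚ)
        = ∑ q ∈ k.divisors ×ˢ (n - k).divisors, (q.1 : ℚ) ^ r * (q.2 : ℚ) ^ s := by
    intro k _
    rw [Finset.sum_product' k.divisors (n-k).divisors (fun d f => (d:ℚ)^r * (f:ℚ)^s)]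
    push_cast [sigma']
    rw [Finset.sum_mul_sum]
  rw [Finset.sum_congr rfl step1,
    Finset.sum_sigma' (Finset.Ico 1 n) (fun k => k.divisors ×ˢ (n - k).divisors)
      (fun k q => (q.1 : ℚ) ^ r * (q.2 : ℚ) ^ s)]
  rw [MS]
  refine Finset.sum_nbij' (fun q => (q.2.1, q.1 / q.2.1, q.2.2, (n - q.1) / q.2.2))
    (fun p => ⟨p.1 * p.2.1, (p.1, p.2.2.1)⟩) ?_ ?_ ?_ ?_ ?_
  · rintro ⟨k, d, e⟩ hq
    simp only [Finset.mem_sigma, Finset.mem_product, Nat.mem_divisors, Finset.mem_Ico] at hq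
    obtain ⟨⟨hk1, hkn⟩, ⟨hd, hk0⟩, ⟨he, hnk0⟩⟩ := hq
    rw [mem_TT]
    dsimp only
    have h1 : d * (k / d) = k := Nat.mul_div_cancel' hd
    have h2 : e * ((n - k) / e) = n - k := Nat.mul_div_cancel' he
    have hd1 : 1 ≤ d := Nat.pos_of_dvd_of_pos hd (Nat.pos_of_ne_zero hk0)
    have he1 : 1 ≤ e := Nat.pos_of_dvd_of_pos he (Nat.pos_of_ne_zero hnk0)
    refine ⟨by omega, hd1, ?_, he1, ?_⟩
    · exact Nat.div_pos (Nat.le_of_dvd (by omega) hd) hd1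
    · exact Nat.div_pos (Nat.le_of_dvd (by omega) he) he1
  · rintro ⟨a, x, b, y⟩ hp
    rw [mem_TT] at hp
    dsimp only at hp ⊢
    obtain ⟨he, h1, h2, h3, h4⟩ := hp
    simp only [Finset.mem_sigma, Finset.mem_product, Nat.mem_divisors, Finset.mem_Ico]
    have hax : 0 < a * x := Nat.mul_pos (by omega) (by omega)
    have hby : 0 < b * y := Nat.mul_pos (by omega) (by omega)
    refine ⟨⟨hax, by omega⟩, ⟨⟨x, rfl⟩, by omega⟩, ⟨y, by omega⟩, by omega⟩
  · rintro ⟨k, d, e⟩ hq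
    simp only [Finset.mem_sigma, Finset.mem_product, Nat.mem_divisors, Finset.mem_Ico] at hq
    obtain ⟨⟨hk1, hkn⟩, ⟨hd, hk0⟩, ⟨he, hnk0⟩⟩ := hq
    have h1 : d * (k / d) = k := Nat.mul_div_cancel' hd
    have h2 : e * ((n - k) / e) = n - k := Nat.mul_div_cancel' he
    dsimp only
    rw [h1]
  · rintro ⟨a, x, b, y⟩ hp
    rw [mem_TT] at hp
    dsimp only at hp ⊢
    obtain ⟨he, h1, h2, h3, h4⟩ := hp
    have e1 : a * x / a = x := Nat.mul_div_cancel_left _ (by omega)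
    have e2 : (n - a * x) / b = y := by
      have : n - a * x = b * y := by omega
      rw [this]; exact Nat.mul_div_cancel_left _ (by omega)
    rw [e1, e2]
  · rintro ⟨k, d, e⟩ hq
    dsimp only
    ring


lemma powsum0 (m : ℕ) (hm : 1 ≤ m) : ∑ x ∈ Finset.Ico 1 m, (x:ℚ)^0 = (m:ℚ) - 1 := by
  induction m, hm using Nat.le_induction with
  | base => norm_num
  | succ m hm ih => rw [Finset.sum_Ico_succ_top hm, ih]; push_cast; ring

lemma powsum1 (m : ℕ) (hm : 1 ≤ m) : ∑ x ∈ Finset.Ico 1 m, (x:ℚ)^1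
    = (m:ℚ)^2/2 - (m:ℚ)/2 := by
  induction m, hm using Nat.le_induction with
  | base => norm_num
  | succ m hm ih => rw [Finset.sum_Ico_succ_top hm, ih]; push_cast; ring

lemma powsum2 (m : ℕ) (hm : 1 ≤ m) : ∑ x ∈ Finset.Ico 1 m, (x:ℚ)^2
    = (m:ℚ)^3/3 - (m:ℚ)^2/2 + (m:ℚ)/6 := by
  induction m, hm using Nat.le_induction with
  | base => norm_num
  | succ m hm ih => rw [Finset.sum_Ico_succ_top hm, ih]; push_cast; ring

lemma powsum3 (m : ℕ) (hm : 1 ≤ m) : ∑ x ∈ Finset.Ico 1 m, (x:ℚ)^3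
    = (m:ℚ)^4/4 - (m:ℚ)^3/2 + (m:ℚ)^2/4 := by
  induction m, hm using Nat.le_induction with
  | base => norm_num
  | succ m hm ih => rw [Finset.sum_Ico_succ_top hm, ih]; push_cast; ring

lemma powsum4 (m : ℕ) (hm : 1 ≤ m) : ∑ x ∈ Finset.Ico 1 m, (x:ℚ)^4
    = (m:ℚ)^5/5 - (m:ℚ)^4/2 + (m:ℚ)^3/3 - (m:ℚ)/30 := by
  induction m, hm using Nat.le_induction with
  | base => norm_num
  | succ m hm ih => rw [Finset.sum_Ico_succ_top hm, ih]; push_cast; ring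

lemma powsum5 (m : ℕ) (hm : 1 ≤ m) : ∑ x ∈ Finset.Ico 1 m, (x:ℚ)^5
    = (m:ℚ)^6/6 - (m:ℚ)^5/2 + 5*(m:ℚ)^4/12 - (m:ℚ)^2/12 := by
  induction m, hm using Nat.le_induction with
  | base => norm_num
  | succ m hm ih => rw [Finset.sum_Ico_succ_top hm, ih]; push_cast; ring

lemma powsum6 (m : ℕ) (hm : 1 ≤ m) : ∑ x ∈ Finset.Ico 1 m, (x:ℚ)^6
    = (m:ℚ)^7/7 - (m:ℚ)^6/2 + (m:ℚ)^5/2 - (m:ℚ)^3/6 + (m:ℚ)/42 := by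
  induction m, hm using Nat.le_induction with
  | base => norm_num
  | succ m hm ih => rw [Finset.sum_Ico_succ_top hm, ih]; push_cast; ring

lemma DS_sigma (n j : ℕ) : DS n j 0 = (sigma' j n : ℚ) := by
  rw [DS, sigma']
  push_cast
  exact Finset.sum_congr rfl (fun d _ => by ring)

lemma DS_nsigma (n j : ℕ) : DS n (j+1) 1 = (n:ℚ) * (sigma' j n : ℚ) := by
  rw [DS, sigma']
  push_cast
  rw [Finset.mul_sum]
  refine Finset.sum_congr rfl (fun d hd => ?_)
  have h := Nat.mul_div_cancel' (Nat.mem_divisors.mp hd).1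
  have hq : (d:ℚ) * ((n/d : ℕ):ℚ) = (n:ℚ) := by exact_mod_cast congrArg (Nat.cast : ℕ → ℚ) h
  linear_combination (d:ℚ)^j * hq

lemma DS_comm (n u v : ℕ) : DS n u v = DS n v u := by
  rw [DS, DS, ← Nat.sum_div_divisors n (fun d => ((d : ℕ):ℚ)^v * ((n / d : ℕ) : ℚ)^u)]
  refine Finset.sum_congr rfl (fun d hd => ?_)
  obtain ⟨hdvd, hn0⟩ := Nat.mem_divisors.mp hd
  rw [Nat.div_div_self hdvd hn0]
  ring

lemma fa_0_0 (m : ℕ) (hm : 1 ≤ m) :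
    ∑ x ∈ Finset.Ico 1 m, (x:ℚ)^0 * ((m - x : ℕ):ℚ)^0 = (-1 : ℚ) * (m:ℚ)^0 + (1 : ℚ) * (m:ℚ)^1 := by
  rw [Finset.sum_congr rfl (g := fun (x : ℕ) => (((1 : ℚ) * (m:ℚ)^0) * (x:ℚ)^0)) ?_]
  · simp only [Finset.sum_add_distrib, ← Finset.mul_sum]
    rw [powsum0 m hm]
    ring
  · intro x hx
    rw [Finset.mem_Ico] at hx
    have hxm : x ≤ m := le_of_lt hx.2
    rw [Nat.cast_sub hxm]
    ring

lemma fa_0_4 (m : ℕ) (hm : 1 ≤ m) :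
    ∑ x ∈ Finset.Ico 1 m, (x:ℚ)^0 * ((m - x : ℕ):ℚ)^4 = (-1/30 : ℚ) * (m:ℚ)^1 + (1/3 : ℚ) * (m:ℚ)^3 + (-1/2 : ℚ) * (m:ℚ)^4 + (1/5 : ℚ) * (m:ℚ)^5 := by
  rw [Finset.sum_congr rfl (g := fun (x : ℕ) => (((1 : ℚ) * (m:ℚ)^4) * (x:ℚ)^0) + (((-4 : ℚ) * (m:ℚ)^3) * (x:ℚ)^1) + (((6 : ℚ) * (m:ℚ)^2) * (x:ℚ)^2) + (((-4 : ℚ) * (m:ℚ)^1) * (x:ℚ)^3) + (((1 : ℚ) * (m:ℚ)^0) * (x:ℚ)^4)) ?_]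
  · simp only [Finset.sum_add_distrib, ← Finset.mul_sum]
    rw [powsum0 m hm, powsum1 m hm, powsum2 m hm, powsum3 m hm, powsum4 m hm]
    ring
  · intro x hx
    rw [Finset.mem_Ico] at hx
    have hxm : x ≤ m := le_of_lt hx.2
    rw [Nat.cast_sub hxm]
    ring

lemma fa_0_6 (m : ℕ) (hm : 1 ≤ m) :
    ∑ x ∈ Finset.Ico 1 m, (x:ℚ)^0 * ((m - x : ℕ):ℚ)^6 = (1/42 : ℚ) * (m:ℚ)^1 + (-1/6 : ℚ) * (m:ℚ)^3 + (1/2 : ℚ) * (m:ℚ)^5 + (-1/2 : ℚ) * (m:ℚ)^6 + (1/7 : ℚ) * (m:ℚ)^7 := by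
  rw [Finset.sum_congr rfl (g := fun (x : ℕ) => (((1 : ℚ) * (m:ℚ)^6) * (x:ℚ)^0) + (((-6 : ℚ) * (m:ℚ)^5) * (x:ℚ)^1) + (((15 : ℚ) * (m:ℚ)^4) * (x:ℚ)^2) + (((-20 : ℚ) * (m:ℚ)^3) * (x:ℚ)^3) + (((15 : ℚ) * (m:ℚ)^2) * (x:ℚ)^4) + (((-6 : ℚ) * (m:ℚ)^1) * (x:ℚ)^5) + (((1 : ℚ) * (m:ℚ)^0) * (x:ℚ)^6)) ?_]
  · simp only [Finset.sum_add_distrib, ← Finset.mul_sum]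
    rw [powsum0 m hm, powsum1 m hm, powsum2 m hm, powsum3 m hm, powsum4 m hm, powsum5 m hm, powsum6 m hm]
    ring
  · intro x hx
    rw [Finset.mem_Ico] at hx
    have hxm : x ≤ m := le_of_lt hx.2
    rw [Nat.cast_sub hxm]
    ring

lemma fa_1_3 (m : ℕ) (hm : 1 ≤ m) :
    ∑ x ∈ Finset.Ico 1 m, (x:ℚ)^1 * ((m - x : ℕ):ℚ)^3 = (1/30 : ℚ) * (m:ℚ)^1 + (-1/12 : ℚ) * (m:ℚ)^3 + (1/20 : ℚ) * (m:ℚ)^5 := by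
  rw [Finset.sum_congr rfl (g := fun (x : ℕ) => (((1 : ℚ) * (m:ℚ)^3) * (x:ℚ)^1) + (((-3 : ℚ) * (m:ℚ)^2) * (x:ℚ)^2) + (((3 : ℚ) * (m:ℚ)^1) * (x:ℚ)^3) + (((-1 : ℚ) * (m:ℚ)^0) * (x:ℚ)^4)) ?_]
  · simp only [Finset.sum_add_distrib, ← Finset.mul_sum]
    rw [powsum1 m hm, powsum2 m hm, powsum3 m hm, powsum4 m hm]
    ring
  · intro x hx
    rw [Finset.mem_Ico] at hx
    have hxm : x ≤ m := le_of_lt hx.2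
    rw [Nat.cast_sub hxm]
    ring

lemma fa_1_5 (m : ℕ) (hm : 1 ≤ m) :
    ∑ x ∈ Finset.Ico 1 m, (x:ℚ)^1 * ((m - x : ℕ):ℚ)^5 = (-1/42 : ℚ) * (m:ℚ)^1 + (1/12 : ℚ) * (m:ℚ)^3 + (-1/12 : ℚ) * (m:ℚ)^5 + (1/42 : ℚ) * (m:ℚ)^7 := by
  rw [Finset.sum_congr rfl (g := fun (x : ℕ) => (((1 : ℚ) * (m:ℚ)^5) * (x:ℚ)^1) + (((-5 : ℚ) * (m:ℚ)^4) * (x:ℚ)^2) + (((10 : ℚ) * (m:ℚ)^3) * (x:ℚ)^3) + (((-10 : ℚ) * (m:ℚ)^2) * (x:ℚ)^4) + (((5 : ℚ) * (m:ℚ)^1) * (x:ℚ)^5) + (((-1 : ℚ) * (m:ℚ)^0) * (x:ℚ)^6)) ?_]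
  · simp only [Finset.sum_add_distrib, ← Finset.mul_sum]
    rw [powsum1 m hm, powsum2 m hm, powsum3 m hm, powsum4 m hm, powsum5 m hm, powsum6 m hm]
    ring
  · intro x hx
    rw [Finset.mem_Ico] at hx
    have hxm : x ≤ m := le_of_lt hx.2
    rw [Nat.cast_sub hxm]
    ring

lemma fa_2_2 (m : ℕ) (hm : 1 ≤ m) :
    ∑ x ∈ Finset.Ico 1 m, (x:ℚ)^2 * ((m - x : ℕ):ℚ)^2 = (-1/30 : ℚ) * (m:ℚ)^1 + (1/30 : ℚ) * (m:ℚ)^5 := by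
  rw [Finset.sum_congr rfl (g := fun (x : ℕ) => (((1 : ℚ) * (m:ℚ)^2) * (x:ℚ)^2) + (((-2 : ℚ) * (m:ℚ)^1) * (x:ℚ)^3) + (((1 : ℚ) * (m:ℚ)^0) * (x:ℚ)^4)) ?_]
  · simp only [Finset.sum_add_distrib, ← Finset.mul_sum]
    rw [powsum2 m hm, powsum3 m hm, powsum4 m hm]
    ring
  · intro x hx
    rw [Finset.mem_Ico] at hx
    have hxm : x ≤ m := le_of_lt hx.2
    rw [Nat.cast_sub hxm]
    ring

lemma fa_2_4 (m : ℕ) (hm : 1 ≤ m) :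
    ∑ x ∈ Finset.Ico 1 m, (x:ℚ)^2 * ((m - x : ℕ):ℚ)^4 = (1/42 : ℚ) * (m:ℚ)^1 + (-1/30 : ℚ) * (m:ℚ)^3 + (1/105 : ℚ) * (m:ℚ)^7 := by
  rw [Finset.sum_congr rfl (g := fun (x : ℕ) => (((1 : ℚ) * (m:ℚ)^4) * (x:ℚ)^2) + (((-4 : ℚ) * (m:ℚ)^3) * (x:ℚ)^3) + (((6 : ℚ) * (m:ℚ)^2) * (x:ℚ)^4) + (((-4 : ℚ) * (m:ℚ)^1) * (x:ℚ)^5) + (((1 : ℚ) * (m:ℚ)^0) * (x:ℚ)^6)) ?_]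
  · simp only [Finset.sum_add_distrib, ← Finset.mul_sum]
    rw [powsum2 m hm, powsum3 m hm, powsum4 m hm, powsum5 m hm, powsum6 m hm]
    ring
  · intro x hx
    rw [Finset.mem_Ico] at hx
    have hxm : x ≤ m := le_of_lt hx.2
    rw [Nat.cast_sub hxm]
    ring

lemma fa_3_3 (m : ℕ) (hm : 1 ≤ m) :
    ∑ x ∈ Finset.Ico 1 m, (x:ℚ)^3 * ((m - x : ℕ):ℚ)^3 = (-1/42 : ℚ) * (m:ℚ)^1 + (1/60 : ℚ) * (m:ℚ)^3 + (1/140 : ℚ) * (m:ℚ)^7 := by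
  rw [Finset.sum_congr rfl (g := fun (x : ℕ) => (((1 : ℚ) * (m:ℚ)^3) * (x:ℚ)^3) + (((-3 : ℚ) * (m:ℚ)^2) * (x:ℚ)^4) + (((3 : ℚ) * (m:ℚ)^1) * (x:ℚ)^5) + (((-1 : ℚ) * (m:ℚ)^0) * (x:ℚ)^6)) ?_]
  · simp only [Finset.sum_add_distrib, ← Finset.mul_sum]
    rw [powsum3 m hm, powsum4 m hm, powsum5 m hm, powsum6 m hm]
    ring
  · intro x hx
    rw [Finset.mem_Ico] at hx
    have hxm : x ≤ m := le_of_lt hx.2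
    rw [Nat.cast_sub hxm]
    ring

theorem conv1 (n : ℕ) : (240 : ℚ) * MS (TT n) 1 0 3 0 = (21 : ℚ) * DS n 5 0 + (10 : ℚ) * DS n 3 0 + (-30 : ℚ) * DS n 4 1 + (-1 : ℚ) * DS n 1 0 := by
  have h0 : DS n 0 1 = DS n 1 0 := DS_comm n 0 1
  have h1 : DS n 0 3 = DS n 3 0 := DS_comm n 0 3
  have h2 : DS n 0 4 = DS n 4 0 := DS_comm n 0 4
  have h3 : DS n 0 5 = DS n 5 0 := DS_comm n 0 5
  have h4 : MS (Agt n) 0 0 0 4 = (1 : ℚ) * MS (Xlt n) 0 4 0 0 + (-4 : ℚ) * MS (Xlt n) 0 3 0 1 + (6 : ℚ) * MS (Xlt n) 0 2 0 2 + (-4 : ℚ) * MS (Xlt n) 0 1 0 3 + (1 : ℚ) * MS (Xlt n) 0 0 0 4 := by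
    simp only [MS]
    rw [sum_bij_AX n (fun (p : ℕ×ℕ×ℕ×ℕ) => (p.1:ℚ)^0 * (p.2.1:ℚ)^0 * (p.2.2.1:ℚ)^0 * (p.2.2.2:ℚ)^4)]
    rw [Finset.sum_congr rfl (g := fun (p : ℕ×ℕ×ℕ×ℕ) => (1 : ℚ) * ((p.1:ℚ)^0 * (p.2.1:ℚ)^4 * (p.2.2.1:ℚ)^0 * (p.2.2.2:ℚ)^0) + (-4 : ℚ) * ((p.1:ℚ)^0 * (p.2.1:ℚ)^3 * (p.2.2.1:ℚ)^0 * (p.2.2.2:ℚ)^1) + (6 : ℚ) * ((p.1:ℚ)^0 * (p.2.1:ℚ)^2 * (p.2.2.1:ℚ)^0 * (p.2.2.2:ℚ)^2) + (-4 : ℚ) * ((p.1:ℚ)^0 * (p.2.1:ℚ)^1 * (p.2.2.1:ℚ)^0 * (p.2.2.2:ℚ)^3) + (1 : ℚ) * ((p.1:ℚ)^0 * (p.2.1:ℚ)^0 * (p.2.2.1:ℚ)^0 * (p.2.2.2:ℚ)^4)) ?_]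
    · simp only [Finset.sum_add_distrib, ← Finset.mul_sum]
    · rintro ⟨a,x,b,y⟩ hp
      rw [Xlt, Finset.mem_filter] at hp
      have hxy : x ≤ y := le_of_lt hp.2
      dsimp only
      rw [Nat.cast_sub hxy]
      push_cast
      ring
  have h5 : MS (Alt n) 0 0 0 4 = MS (Xlt n) 0 0 4 0 := MS_ups_lt n 0 0 0 4
  have h6 : MS (Xgt n) 0 0 0 4 = MS (Agt n) 0 0 4 0 := (MS_ups_gt n 0 0 4 0).symm
  have h7 : MS (Agt n) 0 0 0 4 + MS (Alt n) 0 0 0 4 + MS (Aeq n) 0 0 0 4 = MS (Xgt n) 0 0 0 4 + MS (Xlt n) 0 0 0 4 + MS (Xeq n) 0 0 0 4 := (MS_split_A n 0 0 0 4).symm.trans (MS_split_X n 0 0 0 4)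
  have h8 : MS (Aeq n) 0 0 0 4 = (-1/30 : ℚ) * DS n 0 1 + (1/3 : ℚ) * DS n 0 3 + (-1/2 : ℚ) * DS n 0 4 + (1/5 : ℚ) * DS n 0 5 := by
    simp only [MS]
    rw [sum_diag_A n (fun (p : ℕ×ℕ×ℕ×ℕ) => (p.1:ℚ)^0 * (p.2.1:ℚ)^0 * (p.2.2.1:ℚ)^0 * (p.2.2.2:ℚ)^4)]
    rw [Finset.sum_congr rfl (g := fun (d : ℕ) => (-1/30 : ℚ) * ((d:ℚ)^0 * ((n/d : ℕ):ℚ)^1) + (1/3 : ℚ) * ((d:ℚ)^0 * ((n/d : ℕ):ℚ)^3) + (-1/2 : ℚ) * ((d:ℚ)^0 * ((n/d : ℕ):ℚ)^4) + (1/5 : ℚ) * ((d:ℚ)^0 * ((n/d : ℕ):ℚ)^5)) ?_]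
    · simp only [Finset.sum_add_distrib, ← Finset.mul_sum, DS]
    · intro d hd
      have h0 : n ≠ 0 := (Nat.mem_divisors.mp hd).2
      have hd1 : 0 < d := Nat.pos_of_mem_divisors hd
      have hm : 1 ≤ n / d := Nat.div_pos (Nat.le_of_dvd (Nat.pos_of_ne_zero h0) (Nat.mem_divisors.mp hd).1) hd1
      rw [Finset.sum_congr rfl (g := fun (x : ℕ) => (d:ℚ)^0 * ((x:ℚ)^0 * ((n/d - x : ℕ):ℚ)^4)) ?_]
      · rw [← Finset.mul_sum, fa_0_4 (n/d) hm]
        ring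
      · intro x hx
        dsimp only
        ring
  have h9 : MS (Xeq n) 0 0 0 4 = (-1 : ℚ) * DS n 4 0 + (1 : ℚ) * DS n 4 1 := by
    simp only [MS]
    rw [sum_diag_X n (fun (p : ℕ×ℕ×ℕ×ℕ) => (p.1:ℚ)^0 * (p.2.1:ℚ)^0 * (p.2.2.1:ℚ)^0 * (p.2.2.2:ℚ)^4)]
    rw [Finset.sum_congr rfl (g := fun (d : ℕ) => (-1 : ℚ) * ((d:ℚ)^4 * ((n/d : ℕ):ℚ)^0) + (1 : ℚ) * ((d:ℚ)^4 * ((n/d : ℕ):ℚ)^1)) ?_]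
    · simp only [Finset.sum_add_distrib, ← Finset.mul_sum, DS]
    · intro d hd
      have h0 : n ≠ 0 := (Nat.mem_divisors.mp hd).2
      have hd1 : 0 < d := Nat.pos_of_mem_divisors hd
      have hm : 1 ≤ n / d := Nat.div_pos (Nat.le_of_dvd (Nat.pos_of_ne_zero h0) (Nat.mem_divisors.mp hd).1) hd1
      rw [Finset.sum_congr rfl (g := fun (x : ℕ) => (d:ℚ)^4 * ((x:ℚ)^0 * ((n/d - x : ℕ):ℚ)^0)) ?_]
      · rw [← Finset.mul_sum, fa_0_0 (n/d) hm]
        ring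
      · intro x hx
        dsimp only
        ring
  have h10 : MS (Agt n) 0 0 4 0 = (1 : ℚ) * MS (Xlt n) 0 0 4 0 := by
    simp only [MS]
    rw [sum_bij_AX n (fun (p : ℕ×ℕ×ℕ×ℕ) => (p.1:ℚ)^0 * (p.2.1:ℚ)^0 * (p.2.2.1:ℚ)^4 * (p.2.2.2:ℚ)^0)]
    rw [Finset.sum_congr rfl (g := fun (p : ℕ×ℕ×ℕ×ℕ) => (1 : ℚ) * ((p.1:ℚ)^0 * (p.2.1:ℚ)^0 * (p.2.2.1:ℚ)^4 * (p.2.2.2:ℚ)^0)) ?_]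
    · simp only [Finset.sum_add_distrib, ← Finset.mul_sum]
    · rintro ⟨a,x,b,y⟩ hp
      rw [Xlt, Finset.mem_filter] at hp
      have hxy : x ≤ y := le_of_lt hp.2
      dsimp only
      rw [Nat.cast_sub hxy]
      push_cast
      ring
  have h11 : MS (Agt n) 0 1 0 3 = (-1 : ℚ) * MS (Xlt n) 0 4 0 0 + (3 : ℚ) * MS (Xlt n) 0 3 0 1 + (-3 : ℚ) * MS (Xlt n) 0 2 0 2 + (1 : ℚ) * MS (Xlt n) 0 1 0 3 := by
    simp only [MS]
    rw [sum_bij_AX n (fun (p : ℕ×ℕ×ℕ×ℕ) => (p.1:ℚ)^0 * (p.2.1:ℚ)^1 * (p.2.2.1:ℚ)^0 * (p.2.2.2:ℚ)^3)]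
    rw [Finset.sum_congr rfl (g := fun (p : ℕ×ℕ×ℕ×ℕ) => (-1 : ℚ) * ((p.1:ℚ)^0 * (p.2.1:ℚ)^4 * (p.2.2.1:ℚ)^0 * (p.2.2.2:ℚ)^0) + (3 : ℚ) * ((p.1:ℚ)^0 * (p.2.1:ℚ)^3 * (p.2.2.1:ℚ)^0 * (p.2.2.2:ℚ)^1) + (-3 : ℚ) * ((p.1:ℚ)^0 * (p.2.1:ℚ)^2 * (p.2.2.1:ℚ)^0 * (p.2.2.2:ℚ)^2) + (1 : ℚ) * ((p.1:ℚ)^0 * (p.2.1:ℚ)^1 * (p.2.2.1:ℚ)^0 * (p.2.2.2:ℚ)^3)) ?_]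
    · simp only [Finset.sum_add_distrib, ← Finset.mul_sum]
    · rintro ⟨a,x,b,y⟩ hp
      rw [Xlt, Finset.mem_filter] at hp
      have hxy : x ≤ y := le_of_lt hp.2
      dsimp only
      rw [Nat.cast_sub hxy]
      push_cast
      ring
  have h12 : MS (Alt n) 0 1 0 3 = MS (Agt n) 0 3 0 1 := (MS_tau_gt n 0 3 0 1).symm
  have h13 : MS (Xgt n) 0 1 0 3 = MS (Xlt n) 0 3 0 1 := MS_tau_Xgt n 0 1 0 3
  have h14 : MS (Xgt n) 0 1 0 3 = MS (Agt n) 1 0 3 0 := (MS_ups_gt n 1 0 3 0).symm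
  have h15 : MS (Xlt n) 0 1 0 3 = MS (Alt n) 1 0 3 0 := (MS_ups_lt n 1 0 3 0).symm
  have h16 : MS (Xeq n) 0 1 0 3 = MS (Aeq n) 1 0 3 0 := (MS_ups_eq n 1 0 3 0).symm
  have h17 : MS (Agt n) 0 1 0 3 + MS (Alt n) 0 1 0 3 + MS (Aeq n) 0 1 0 3 = MS (Xgt n) 0 1 0 3 + MS (Xlt n) 0 1 0 3 + MS (Xeq n) 0 1 0 3 := (MS_split_A n 0 1 0 3).symm.trans (MS_split_X n 0 1 0 3)
  have h18 : MS (Aeq n) 0 1 0 3 = (1/30 : ℚ) * DS n 0 1 + (-1/12 : ℚ) * DS n 0 3 + (1/20 : ℚ) * DS n 0 5 := by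
    simp only [MS]
    rw [sum_diag_A n (fun (p : ℕ×ℕ×ℕ×ℕ) => (p.1:ℚ)^0 * (p.2.1:ℚ)^1 * (p.2.2.1:ℚ)^0 * (p.2.2.2:ℚ)^3)]
    rw [Finset.sum_congr rfl (g := fun (d : ℕ) => (1/30 : ℚ) * ((d:ℚ)^0 * ((n/d : ℕ):ℚ)^1) + (-1/12 : ℚ) * ((d:ℚ)^0 * ((n/d : ℕ):ℚ)^3) + (1/20 : ℚ) * ((d:ℚ)^0 * ((n/d : ℕ):ℚ)^5)) ?_]
    · simp only [Finset.sum_add_distrib, ← Finset.mul_sum, DS]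
    · intro d hd
      have h0 : n ≠ 0 := (Nat.mem_divisors.mp hd).2
      have hd1 : 0 < d := Nat.pos_of_mem_divisors hd
      have hm : 1 ≤ n / d := Nat.div_pos (Nat.le_of_dvd (Nat.pos_of_ne_zero h0) (Nat.mem_divisors.mp hd).1) hd1
      rw [Finset.sum_congr rfl (g := fun (x : ℕ) => (d:ℚ)^0 * ((x:ℚ)^1 * ((n/d - x : ℕ):ℚ)^3)) ?_]
      · rw [← Finset.mul_sum, fa_1_3 (n/d) hm]
        ring
      · intro x hx
        dsimp only
        ring
  have h19 : MS (Xeq n) 0 1 0 3 = (-1 : ℚ) * DS n 4 0 + (1 : ℚ) * DS n 4 1 := by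
    simp only [MS]
    rw [sum_diag_X n (fun (p : ℕ×ℕ×ℕ×ℕ) => (p.1:ℚ)^0 * (p.2.1:ℚ)^1 * (p.2.2.1:ℚ)^0 * (p.2.2.2:ℚ)^3)]
    rw [Finset.sum_congr rfl (g := fun (d : ℕ) => (-1 : ℚ) * ((d:ℚ)^4 * ((n/d : ℕ):ℚ)^0) + (1 : ℚ) * ((d:ℚ)^4 * ((n/d : ℕ):ℚ)^1)) ?_]
    · simp only [Finset.sum_add_distrib, ← Finset.mul_sum, DS]
    · intro d hd
      have h0 : n ≠ 0 := (Nat.mem_divisors.mp hd).2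
      have hd1 : 0 < d := Nat.pos_of_mem_divisors hd
      have hm : 1 ≤ n / d := Nat.div_pos (Nat.le_of_dvd (Nat.pos_of_ne_zero h0) (Nat.mem_divisors.mp hd).1) hd1
      rw [Finset.sum_congr rfl (g := fun (x : ℕ) => (d:ℚ)^4 * ((x:ℚ)^0 * ((n/d - x : ℕ):ℚ)^0)) ?_]
      · rw [← Finset.mul_sum, fa_0_0 (n/d) hm]
        ring
      · intro x hx
        dsimp only
        ring
  have h20 : MS (Agt n) 0 2 0 2 = (1 : ℚ) * MS (Xlt n) 0 4 0 0 + (-2 : ℚ) * MS (Xlt n) 0 3 0 1 + (1 : ℚ) * MS (Xlt n) 0 2 0 2 := by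
    simp only [MS]
    rw [sum_bij_AX n (fun (p : ℕ×ℕ×ℕ×ℕ) => (p.1:ℚ)^0 * (p.2.1:ℚ)^2 * (p.2.2.1:ℚ)^0 * (p.2.2.2:ℚ)^2)]
    rw [Finset.sum_congr rfl (g := fun (p : ℕ×ℕ×ℕ×ℕ) => (1 : ℚ) * ((p.1:ℚ)^0 * (p.2.1:ℚ)^4 * (p.2.2.1:ℚ)^0 * (p.2.2.2:ℚ)^0) + (-2 : ℚ) * ((p.1:ℚ)^0 * (p.2.1:ℚ)^3 * (p.2.2.1:ℚ)^0 * (p.2.2.2:ℚ)^1) + (1 : ℚ) * ((p.1:ℚ)^0 * (p.2.1:ℚ)^2 * (p.2.2.1:ℚ)^0 * (p.2.2.2:ℚ)^2)) ?_]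
    · simp only [Finset.sum_add_distrib, ← Finset.mul_sum]
    · rintro ⟨a,x,b,y⟩ hp
      rw [Xlt, Finset.mem_filter] at hp
      have hxy : x ≤ y := le_of_lt hp.2
      dsimp only
      rw [Nat.cast_sub hxy]
      push_cast
      ring
  have h21 : MS (Agt n) 0 2 0 2 = MS (Alt n) 0 2 0 2 := MS_tau_gt n 0 2 0 2
  have h22 : MS (Xgt n) 0 2 0 2 = MS (Xlt n) 0 2 0 2 := MS_tau_Xgt n 0 2 0 2
  have h23 : MS (Agt n) 0 2 0 2 + MS (Alt n) 0 2 0 2 + MS (Aeq n) 0 2 0 2 = MS (Xgt n) 0 2 0 2 + MS (Xlt n) 0 2 0 2 + MS (Xeq n) 0 2 0 2 := (MS_split_A n 0 2 0 2).symm.trans (MS_split_X n 0 2 0 2)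
  have h24 : MS (Aeq n) 0 2 0 2 = (-1/30 : ℚ) * DS n 0 1 + (1/30 : ℚ) * DS n 0 5 := by
    simp only [MS]
    rw [sum_diag_A n (fun (p : ℕ×ℕ×ℕ×ℕ) => (p.1:ℚ)^0 * (p.2.1:ℚ)^2 * (p.2.2.1:ℚ)^0 * (p.2.2.2:ℚ)^2)]
    rw [Finset.sum_congr rfl (g := fun (d : ℕ) => (-1/30 : ℚ) * ((d:ℚ)^0 * ((n/d : ℕ):ℚ)^1) + (1/30 : ℚ) * ((d:ℚ)^0 * ((n/d : ℕ):ℚ)^5)) ?_]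
    · simp only [Finset.sum_add_distrib, ← Finset.mul_sum, DS]
    · intro d hd
      have h0 : n ≠ 0 := (Nat.mem_divisors.mp hd).2
      have hd1 : 0 < d := Nat.pos_of_mem_divisors hd
      have hm : 1 ≤ n / d := Nat.div_pos (Nat.le_of_dvd (Nat.pos_of_ne_zero h0) (Nat.mem_divisors.mp hd).1) hd1
      rw [Finset.sum_congr rfl (g := fun (x : ℕ) => (d:ℚ)^0 * ((x:ℚ)^2 * ((n/d - x : ℕ):ℚ)^2)) ?_]
      · rw [← Finset.mul_sum, fa_2_2 (n/d) hm]
        ring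
      · intro x hx
        dsimp only
        ring
  have h25 : MS (Xeq n) 0 2 0 2 = (-1 : ℚ) * DS n 4 0 + (1 : ℚ) * DS n 4 1 := by
    simp only [MS]
    rw [sum_diag_X n (fun (p : ℕ×ℕ×ℕ×ℕ) => (p.1:ℚ)^0 * (p.2.1:ℚ)^2 * (p.2.2.1:ℚ)^0 * (p.2.2.2:ℚ)^2)]
    rw [Finset.sum_congr rfl (g := fun (d : ℕ) => (-1 : ℚ) * ((d:ℚ)^4 * ((n/d : ℕ):ℚ)^0) + (1 : ℚ) * ((d:ℚ)^4 * ((n/d : ℕ):ℚ)^1)) ?_]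
    · simp only [Finset.sum_add_distrib, ← Finset.mul_sum, DS]
    · intro d hd
      have h0 : n ≠ 0 := (Nat.mem_divisors.mp hd).2
      have hd1 : 0 < d := Nat.pos_of_mem_divisors hd
      have hm : 1 ≤ n / d := Nat.div_pos (Nat.le_of_dvd (Nat.pos_of_ne_zero h0) (Nat.mem_divisors.mp hd).1) hd1
      rw [Finset.sum_congr rfl (g := fun (x : ℕ) => (d:ℚ)^4 * ((x:ℚ)^0 * ((n/d - x : ℕ):ℚ)^0)) ?_]
      · rw [← Finset.mul_sum, fa_0_0 (n/d) hm]
        ring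
      · intro x hx
        dsimp only
        ring
  have h26 : MS (Agt n) 0 3 0 1 = (-1 : ℚ) * MS (Xlt n) 0 4 0 0 + (1 : ℚ) * MS (Xlt n) 0 3 0 1 := by
    simp only [MS]
    rw [sum_bij_AX n (fun (p : ℕ×ℕ×ℕ×ℕ) => (p.1:ℚ)^0 * (p.2.1:ℚ)^3 * (p.2.2.1:ℚ)^0 * (p.2.2.2:ℚ)^1)]
    rw [Finset.sum_congr rfl (g := fun (p : ℕ×ℕ×ℕ×ℕ) => (-1 : ℚ) * ((p.1:ℚ)^0 * (p.2.1:ℚ)^4 * (p.2.2.1:ℚ)^0 * (p.2.2.2:ℚ)^0) + (1 : ℚ) * ((p.1:ℚ)^0 * (p.2.1:ℚ)^3 * (p.2.2.1:ℚ)^0 * (p.2.2.2:ℚ)^1)) ?_]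
    · simp only [Finset.sum_add_distrib, ← Finset.mul_sum]
    · rintro ⟨a,x,b,y⟩ hp
      rw [Xlt, Finset.mem_filter] at hp
      have hxy : x ≤ y := le_of_lt hp.2
      dsimp only
      rw [Nat.cast_sub hxy]
      push_cast
      ring
  have hsp0 := MS_split_A n 1 0 3 0
  linear_combination (-1 : ℚ) * h0 + (10 : ℚ) * h1 + (-30 : ℚ) * h2 + (21 : ℚ) * h3 + (60 : ℚ) * h4 + (60 : ℚ) * h5 + (-60 : ℚ) * h6 + (-60 : ℚ) * h7 + (60 : ℚ) * h8 + (-60 : ℚ) * h9 + (-60 : ℚ) * h10 + (120 : ℚ) * h11 + (120 : ℚ) * h12 + (120 : ℚ) * h13 + (-240 : ℚ) * h14 + (-240 : ℚ) * h15 + (-240 : ℚ) * h16 + (-120 : ℚ) * h17 + (120 : ℚ) * h18 + (120 : ℚ) * h19 + (180 : ℚ) * h20 + (-90 : ℚ) * h21 + (-90 : ℚ) * h22 + (-90 : ℚ) * h23 + (90 : ℚ) * h24 + (-90 : ℚ) * h25 + (120 : ℚ) * h26 + (240 : ℚ) * hsp0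

theorem conv2 (n : ℕ) : (12096 : ℚ) * MS (TT n) 1 0 5 0 + (-57600 : ℚ) * MS (TT n) 3 0 3 0 = (504 : ℚ) * DS n 5 0 + (-1008 : ℚ) * DS n 6 1 + (480 : ℚ) * DS n 3 0 + (24 : ℚ) * DS n 1 0 := by
  have h0 : DS n 0 1 = DS n 1 0 := DS_comm n 0 1
  have h1 : DS n 0 3 = DS n 3 0 := DS_comm n 0 3
  have h2 : DS n 0 5 = DS n 5 0 := DS_comm n 0 5
  have h3 : DS n 0 6 = DS n 6 0 := DS_comm n 0 6
  have h4 : MS (Agt n) 0 0 0 6 = (1 : ℚ) * MS (Xlt n) 0 6 0 0 + (-6 : ℚ) * MS (Xlt n) 0 5 0 1 + (15 : ℚ) * MS (Xlt n) 0 4 0 2 + (-20 : ℚ) * MS (Xlt n) 0 3 0 3 + (15 : ℚ) * MS (Xlt n) 0 2 0 4 + (-6 : ℚ) * MS (Xlt n) 0 1 0 5 + (1 : ℚ) * MS (Xlt n) 0 0 0 6 := by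
    simp only [MS]
    rw [sum_bij_AX n (fun (p : ℕ×ℕ×ℕ×ℕ) => (p.1:ℚ)^0 * (p.2.1:ℚ)^0 * (p.2.2.1:ℚ)^0 * (p.2.2.2:ℚ)^6)]
    rw [Finset.sum_congr rfl (g := fun (p : ℕ×ℕ×ℕ×ℕ) => (1 : ℚ) * ((p.1:ℚ)^0 * (p.2.1:ℚ)^6 * (p.2.2.1:ℚ)^0 * (p.2.2.2:ℚ)^0) + (-6 : ℚ) * ((p.1:ℚ)^0 * (p.2.1:ℚ)^5 * (p.2.2.1:ℚ)^0 * (p.2.2.2:ℚ)^1) + (15 : ℚ) * ((p.1:ℚ)^0 * (p.2.1:ℚ)^4 * (p.2.2.1:ℚ)^0 * (p.2.2.2:ℚ)^2) + (-20 : ℚ) * ((p.1:ℚ)^0 * (p.2.1:ℚ)^3 * (p.2.2.1:ℚ)^0 * (p.2.2.2:ℚ)^3) + (15 : ℚ) * ((p.1:ℚ)^0 * (p.2.1:ℚ)^2 * (p.2.2.1:ℚ)^0 * (p.2.2.2:ℚ)^4) + (-6 : ℚ) * ((p.1:ℚ)^0 * (p.2.1:ℚ)^1 * (p.2.2.1:ℚ)^0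 * (p.2.2.2:ℚ)^5) + (1 : ℚ) * ((p.1:ℚ)^0 * (p.2.1:ℚ)^0 * (p.2.2.1:ℚ)^0 * (p.2.2.2:ℚ)^6)) ?_]
    · simp only [Finset.sum_add_distrib, ← Finset.mul_sum]
    · rintro ⟨a,x,b,y⟩ hp
      rw [Xlt, Finset.mem_filter] at hp
      have hxy : x ≤ y := le_of_lt hp.2
      dsimp only
      rw [Nat.cast_sub hxy]
      push_cast
      ring
  have h5 : MS (Agt n) 0 0 0 6 + MS (Alt n) 0 0 0 6 + MS (Aeq n) 0 0 0 6 = MS (Xgt n) 0 0 0 6 + MS (Xlt n) 0 0 0 6 + MS (Xeq n) 0 0 0 6 := (MS_split_A n 0 0 0 6).symm.trans (MS_split_X n 0 0 0 6)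
  have h6 : MS (Aeq n) 0 0 0 6 = (1/42 : ℚ) * DS n 0 1 + (-1/6 : ℚ) * DS n 0 3 + (1/2 : ℚ) * DS n 0 5 + (-1/2 : ℚ) * DS n 0 6 + (1/7 : ℚ) * DS n 0 7 := by
    simp only [MS]
    rw [sum_diag_A n (fun (p : ℕ×ℕ×ℕ×ℕ) => (p.1:ℚ)^0 * (p.2.1:ℚ)^0 * (p.2.2.1:ℚ)^0 * (p.2.2.2:ℚ)^6)]
    rw [Finset.sum_congr rfl (g := fun (d : ℕ) => (1/42 : ℚ) * ((d:ℚ)^0 * ((n/d : ℕ):ℚ)^1) + (-1/6 : ℚ) * ((d:ℚ)^0 * ((n/d : ℕ):ℚ)^3) + (1/2 : ℚ) * ((d:ℚ)^0 * ((n/d : ℕ):ℚ)^5) + (-1/2 : ℚ) * ((d:ℚ)^0 * ((n/d : ℕ):ℚ)^6) + (1/7 : ℚ) * ((d:ℚ)^0 * ((n/d : ℕ):ℚ)^7)) ?_]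
    · simp only [Finset.sum_add_distrib, ← Finset.mul_sum, DS]
    · intro d hd
      have h0 : n ≠ 0 := (Nat.mem_divisors.mp hd).2
      have hd1 : 0 < d := Nat.pos_of_mem_divisors hd
      have hm : 1 ≤ n / d := Nat.div_pos (Nat.le_of_dvd (Nat.pos_of_ne_zero h0) (Nat.mem_divisors.mp hd).1) hd1
      rw [Finset.sum_congr rfl (g := fun (x : ℕ) => (d:ℚ)^0 * ((x:ℚ)^0 * ((n/d - x : ℕ):ℚ)^6)) ?_]
      · rw [← Finset.mul_sum, fa_0_6 (n/d) hm]
        ring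
      · intro x hx
        dsimp only
        ring
  have h7 : MS (Xeq n) 0 0 0 6 = (-1 : ℚ) * DS n 6 0 + (1 : ℚ) * DS n 6 1 := by
    simp only [MS]
    rw [sum_diag_X n (fun (p : ℕ×ℕ×ℕ×ℕ) => (p.1:ℚ)^0 * (p.2.1:ℚ)^0 * (p.2.2.1:ℚ)^0 * (p.2.2.2:ℚ)^6)]
    rw [Finset.sum_congr rfl (g := fun (d : ℕ) => (-1 : ℚ) * ((d:ℚ)^6 * ((n/d : ℕ):ℚ)^0) + (1 : ℚ) * ((d:ℚ)^6 * ((n/d : ℕ):ℚ)^1)) ?_]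
    · simp only [Finset.sum_add_distrib, ← Finset.mul_sum, DS]
    · intro d hd
      have h0 : n ≠ 0 := (Nat.mem_divisors.mp hd).2
      have hd1 : 0 < d := Nat.pos_of_mem_divisors hd
      have hm : 1 ≤ n / d := Nat.div_pos (Nat.le_of_dvd (Nat.pos_of_ne_zero h0) (Nat.mem_divisors.mp hd).1) hd1
      rw [Finset.sum_congr rfl (g := fun (x : ℕ) => (d:ℚ)^6 * ((x:ℚ)^0 * ((n/d - x : ℕ):ℚ)^0)) ?_]
      · rw [← Finset.mul_sum, fa_0_0 (n/d) hm]
        ring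
      · intro x hx
        dsimp only
        ring
  have h8 : MS (Agt n) 0 0 6 0 = (1 : ℚ) * MS (Xlt n) 0 0 6 0 := by
    simp only [MS]
    rw [sum_bij_AX n (fun (p : ℕ×ℕ×ℕ×ℕ) => (p.1:ℚ)^0 * (p.2.1:ℚ)^0 * (p.2.2.1:ℚ)^6 * (p.2.2.2:ℚ)^0)]
    rw [Finset.sum_congr rfl (g := fun (p : ℕ×ℕ×ℕ×ℕ) => (1 : ℚ) * ((p.1:ℚ)^0 * (p.2.1:ℚ)^0 * (p.2.2.1:ℚ)^6 * (p.2.2.2:ℚ)^0)) ?_]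
    · simp only [Finset.sum_add_distrib, ← Finset.mul_sum]
    · rintro ⟨a,x,b,y⟩ hp
      rw [Xlt, Finset.mem_filter] at hp
      have hxy : x ≤ y := le_of_lt hp.2
      dsimp only
      rw [Nat.cast_sub hxy]
      push_cast
      ring
  have h9 : MS (Agt n) 0 0 6 0 = MS (Xgt n) 0 0 0 6 := MS_ups_gt n 0 0 6 0
  have h10 : MS (Xlt n) 0 0 6 0 = MS (Alt n) 0 0 0 6 := (MS_ups_lt n 0 0 0 6).symm
  have h11 : MS (Agt n) 0 1 0 5 = (-1 : ℚ) * MS (Xlt n) 0 6 0 0 + (5 : ℚ) * MS (Xlt n) 0 5 0 1 + (-10 : ℚ) * MS (Xlt n) 0 4 0 2 + (10 : ℚ) * MS (Xlt n) 0 3 0 3 + (-5 : ℚ) * MS (Xlt n) 0 2 0 4 + (1 : ℚ) * MS (Xlt n) 0 1 0 5 := by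
    simp only [MS]
    rw [sum_bij_AX n (fun (p : ℕ×ℕ×ℕ×ℕ) => (p.1:ℚ)^0 * (p.2.1:ℚ)^1 * (p.2.2.1:ℚ)^0 * (p.2.2.2:ℚ)^5)]
    rw [Finset.sum_congr rfl (g := fun (p : ℕ×ℕ×ℕ×ℕ) => (-1 : ℚ) * ((p.1:ℚ)^0 * (p.2.1:ℚ)^6 * (p.2.2.1:ℚ)^0 * (p.2.2.2:ℚ)^0) + (5 : ℚ) * ((p.1:ℚ)^0 * (p.2.1:ℚ)^5 * (p.2.2.1:ℚ)^0 * (p.2.2.2:ℚ)^1) + (-10 : ℚ) * ((p.1:ℚ)^0 * (p.2.1:ℚ)^4 * (p.2.2.1:ℚ)^0 * (p.2.2.2:ℚ)^2) + (10 : ℚ) * ((p.1:ℚ)^0 * (p.2.1:ℚ)^3 * (p.2.2.1:ℚ)^0 * (p.2.2.2:ℚ)^3) + (-5 : ℚ) * ((p.1:ℚ)^0 * (p.2.1:ℚ)^2 * (p.2.2.1:ℚ)^0 * (p.2.2.2:ℚ)^4) + (1 : ℚ) * ((p.1:ℚ)^0 * (p.2.1:ℚ)^1 * (p.2.2.1:ℚ)^0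 * (p.2.2.2:ℚ)^5)) ?_]
    · simp only [Finset.sum_add_distrib, ← Finset.mul_sum]
    · rintro ⟨a,x,b,y⟩ hp
      rw [Xlt, Finset.mem_filter] at hp
      have hxy : x ≤ y := le_of_lt hp.2
      dsimp only
      rw [Nat.cast_sub hxy]
      push_cast
      ring
  have h12 : MS (Xgt n) 0 1 0 5 = MS (Xlt n) 0 5 0 1 := MS_tau_Xgt n 0 1 0 5
  have h13 : MS (Xgt n) 0 1 0 5 = MS (Agt n) 1 0 5 0 := (MS_ups_gt n 1 0 5 0).symm
  have h14 : MS (Xlt n) 0 1 0 5 = MS (Alt n) 1 0 5 0 := (MS_ups_lt n 1 0 5 0).symm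
  have h15 : MS (Xeq n) 0 1 0 5 = MS (Aeq n) 1 0 5 0 := (MS_ups_eq n 1 0 5 0).symm
  have h16 : MS (Agt n) 0 1 0 5 + MS (Alt n) 0 1 0 5 + MS (Aeq n) 0 1 0 5 = MS (Xgt n) 0 1 0 5 + MS (Xlt n) 0 1 0 5 + MS (Xeq n) 0 1 0 5 := (MS_split_A n 0 1 0 5).symm.trans (MS_split_X n 0 1 0 5)
  have h17 : MS (Aeq n) 0 1 0 5 = (-1/42 : ℚ) * DS n 0 1 + (1/12 : ℚ) * DS n 0 3 + (-1/12 : ℚ) * DS n 0 5 + (1/42 : ℚ) * DS n 0 7 := by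
    simp only [MS]
    rw [sum_diag_A n (fun (p : ℕ×ℕ×ℕ×ℕ) => (p.1:ℚ)^0 * (p.2.1:ℚ)^1 * (p.2.2.1:ℚ)^0 * (p.2.2.2:ℚ)^5)]
    rw [Finset.sum_congr rfl (g := fun (d : ℕ) => (-1/42 : ℚ) * ((d:ℚ)^0 * ((n/d : ℕ):ℚ)^1) + (1/12 : ℚ) * ((d:ℚ)^0 * ((n/d : ℕ):ℚ)^3) + (-1/12 : ℚ) * ((d:ℚ)^0 * ((n/d : ℕ):ℚ)^5) + (1/42 : ℚ) * ((d:ℚ)^0 * ((n/d : ℕ):ℚ)^7)) ?_]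
    · simp only [Finset.sum_add_distrib, ← Finset.mul_sum, DS]
    · intro d hd
      have h0 : n ≠ 0 := (Nat.mem_divisors.mp hd).2
      have hd1 : 0 < d := Nat.pos_of_mem_divisors hd
      have hm : 1 ≤ n / d := Nat.div_pos (Nat.le_of_dvd (Nat.pos_of_ne_zero h0) (Nat.mem_divisors.mp hd).1) hd1
      rw [Finset.sum_congr rfl (g := fun (x : ℕ) => (d:ℚ)^0 * ((x:ℚ)^1 * ((n/d - x : ℕ):ℚ)^5)) ?_]
      · rw [← Finset.mul_sum, fa_1_5 (n/d) hm]
        ring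
      · intro x hx
        dsimp only
        ring
  have h18 : MS (Xeq n) 0 1 0 5 = (-1 : ℚ) * DS n 6 0 + (1 : ℚ) * DS n 6 1 := by
    simp only [MS]
    rw [sum_diag_X n (fun (p : ℕ×ℕ×ℕ×ℕ) => (p.1:ℚ)^0 * (p.2.1:ℚ)^1 * (p.2.2.1:ℚ)^0 * (p.2.2.2:ℚ)^5)]
    rw [Finset.sum_congr rfl (g := fun (d : ℕ) => (-1 : ℚ) * ((d:ℚ)^6 * ((n/d : ℕ):ℚ)^0) + (1 : ℚ) * ((d:ℚ)^6 * ((n/d : ℕ):ℚ)^1)) ?_]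
    · simp only [Finset.sum_add_distrib, ← Finset.mul_sum, DS]
    · intro d hd
      have h0 : n ≠ 0 := (Nat.mem_divisors.mp hd).2
      have hd1 : 0 < d := Nat.pos_of_mem_divisors hd
      have hm : 1 ≤ n / d := Nat.div_pos (Nat.le_of_dvd (Nat.pos_of_ne_zero h0) (Nat.mem_divisors.mp hd).1) hd1
      rw [Finset.sum_congr rfl (g := fun (x : ℕ) => (d:ℚ)^6 * ((x:ℚ)^0 * ((n/d - x : ℕ):ℚ)^0)) ?_]
      · rw [← Finset.mul_sum, fa_0_0 (n/d) hm]
        ring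
      · intro x hx
        dsimp only
        ring
  have h19 : MS (Agt n) 0 2 0 4 = (1 : ℚ) * MS (Xlt n) 0 6 0 0 + (-4 : ℚ) * MS (Xlt n) 0 5 0 1 + (6 : ℚ) * MS (Xlt n) 0 4 0 2 + (-4 : ℚ) * MS (Xlt n) 0 3 0 3 + (1 : ℚ) * MS (Xlt n) 0 2 0 4 := by
    simp only [MS]
    rw [sum_bij_AX n (fun (p : ℕ×ℕ×ℕ×ℕ) => (p.1:ℚ)^0 * (p.2.1:ℚ)^2 * (p.2.2.1:ℚ)^0 * (p.2.2.2:ℚ)^4)]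
    rw [Finset.sum_congr rfl (g := fun (p : ℕ×ℕ×ℕ×ℕ) => (1 : ℚ) * ((p.1:ℚ)^0 * (p.2.1:ℚ)^6 * (p.2.2.1:ℚ)^0 * (p.2.2.2:ℚ)^0) + (-4 : ℚ) * ((p.1:ℚ)^0 * (p.2.1:ℚ)^5 * (p.2.2.1:ℚ)^0 * (p.2.2.2:ℚ)^1) + (6 : ℚ) * ((p.1:ℚ)^0 * (p.2.1:ℚ)^4 * (p.2.2.1:ℚ)^0 * (p.2.2.2:ℚ)^2) + (-4 : ℚ) * ((p.1:ℚ)^0 * (p.2.1:ℚ)^3 * (p.2.2.1:ℚ)^0 * (p.2.2.2:ℚ)^3) + (1 : ℚ) * ((p.1:ℚ)^0 * (p.2.1:ℚ)^2 * (p.2.2.1:ℚ)^0 * (p.2.2.2:ℚ)^4)) ?_]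
    · simp only [Finset.sum_add_distrib, ← Finset.mul_sum]
    · rintro ⟨a,x,b,y⟩ hp
      rw [Xlt, Finset.mem_filter] at hp
      have hxy : x ≤ y := le_of_lt hp.2
      dsimp only
      rw [Nat.cast_sub hxy]
      push_cast
      ring
  have h20 : MS (Xgt n) 0 2 0 4 = MS (Xlt n) 0 4 0 2 := MS_tau_Xgt n 0 2 0 4
  have h21 : MS (Agt n) 0 2 0 4 + MS (Alt n) 0 2 0 4 + MS (Aeq n) 0 2 0 4 = MS (Xgt n) 0 2 0 4 + MS (Xlt n) 0 2 0 4 + MS (Xeq n) 0 2 0 4 := (MS_split_A n 0 2 0 4).symm.trans (MS_split_X n 0 2 0 4)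
  have h22 : MS (Aeq n) 0 2 0 4 = (1/42 : ℚ) * DS n 0 1 + (-1/30 : ℚ) * DS n 0 3 + (1/105 : ℚ) * DS n 0 7 := by
    simp only [MS]
    rw [sum_diag_A n (fun (p : ℕ×ℕ×ℕ×ℕ) => (p.1:ℚ)^0 * (p.2.1:ℚ)^2 * (p.2.2.1:ℚ)^0 * (p.2.2.2:ℚ)^4)]
    rw [Finset.sum_congr rfl (g := fun (d : ℕ) => (1/42 : ℚ) * ((d:ℚ)^0 * ((n/d : ℕ):ℚ)^1) + (-1/30 : ℚ) * ((d:ℚ)^0 * ((n/d : ℕ):ℚ)^3) + (1/105 : ℚ) * ((d:ℚ)^0 * ((n/d : ℕ):ℚ)^7)) ?_]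
    · simp only [Finset.sum_add_distrib, ← Finset.mul_sum, DS]
    · intro d hd
      have h0 : n ≠ 0 := (Nat.mem_divisors.mp hd).2
      have hd1 : 0 < d := Nat.pos_of_mem_divisors hd
      have hm : 1 ≤ n / d := Nat.div_pos (Nat.le_of_dvd (Nat.pos_of_ne_zero h0) (Nat.mem_divisors.mp hd).1) hd1
      rw [Finset.sum_congr rfl (g := fun (x : ℕ) => (d:ℚ)^0 * ((x:ℚ)^2 * ((n/d - x : ℕ):ℚ)^4)) ?_]
      · rw [← Finset.mul_sum, fa_2_4 (n/d) hm]
        ring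
      · intro x hx
        dsimp only
        ring
  have h23 : MS (Xeq n) 0 2 0 4 = (-1 : ℚ) * DS n 6 0 + (1 : ℚ) * DS n 6 1 := by
    simp only [MS]
    rw [sum_diag_X n (fun (p : ℕ×ℕ×ℕ×ℕ) => (p.1:ℚ)^0 * (p.2.1:ℚ)^2 * (p.2.2.1:ℚ)^0 * (p.2.2.2:ℚ)^4)]
    rw [Finset.sum_congr rfl (g := fun (d : ℕ) => (-1 : ℚ) * ((d:ℚ)^6 * ((n/d : ℕ):ℚ)^0) + (1 : ℚ) * ((d:ℚ)^6 * ((n/d : ℕ):ℚ)^1)) ?_]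
    · simp only [Finset.sum_add_distrib, ← Finset.mul_sum, DS]
    · intro d hd
      have h0 : n ≠ 0 := (Nat.mem_divisors.mp hd).2
      have hd1 : 0 < d := Nat.pos_of_mem_divisors hd
      have hm : 1 ≤ n / d := Nat.div_pos (Nat.le_of_dvd (Nat.pos_of_ne_zero h0) (Nat.mem_divisors.mp hd).1) hd1
      rw [Finset.sum_congr rfl (g := fun (x : ℕ) => (d:ℚ)^6 * ((x:ℚ)^0 * ((n/d - x : ℕ):ℚ)^0)) ?_]
      · rw [← Finset.mul_sum, fa_0_0 (n/d) hm]
        ring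
      · intro x hx
        dsimp only
        ring
  have h24 : MS (Agt n) 0 3 0 3 = (-1 : ℚ) * MS (Xlt n) 0 6 0 0 + (3 : ℚ) * MS (Xlt n) 0 5 0 1 + (-3 : ℚ) * MS (Xlt n) 0 4 0 2 + (1 : ℚ) * MS (Xlt n) 0 3 0 3 := by
    simp only [MS]
    rw [sum_bij_AX n (fun (p : ℕ×ℕ×ℕ×ℕ) => (p.1:ℚ)^0 * (p.2.1:ℚ)^3 * (p.2.2.1:ℚ)^0 * (p.2.2.2:ℚ)^3)]
    rw [Finset.sum_congr rfl (g := fun (p : ℕ×ℕ×ℕ×ℕ) => (-1 : ℚ) * ((p.1:ℚ)^0 * (p.2.1:ℚ)^6 * (p.2.2.1:ℚ)^0 * (p.2.2.2:ℚ)^0) + (3 : ℚ) * ((p.1:ℚ)^0 * (p.2.1:ℚ)^5 * (p.2.2.1:ℚ)^0 * (p.2.2.2:ℚ)^1) + (-3 : ℚ) * ((p.1:ℚ)^0 * (p.2.1:ℚ)^4 * (p.2.2.1:ℚ)^0 * (p.2.2.2:ℚ)^2) + (1 : ℚ) * ((p.1:ℚ)^0 * (p.2.1:ℚ)^3 * (p.2.2.1:ℚ)^0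 * (p.2.2.2:ℚ)^3)) ?_]
    · simp only [Finset.sum_add_distrib, ← Finset.mul_sum]
    · rintro ⟨a,x,b,y⟩ hp
      rw [Xlt, Finset.mem_filter] at hp
      have hxy : x ≤ y := le_of_lt hp.2
      dsimp only
      rw [Nat.cast_sub hxy]
      push_cast
      ring
  have h25 : MS (Agt n) 0 3 0 3 = MS (Alt n) 0 3 0 3 := MS_tau_gt n 0 3 0 3
  have h26 : MS (Xgt n) 0 3 0 3 = MS (Xlt n) 0 3 0 3 := MS_tau_Xgt n 0 3 0 3
  have h27 : MS (Xgt n) 0 3 0 3 = MS (Agt n) 3 0 3 0 := (MS_ups_gt n 3 0 3 0).symm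
  have h28 : MS (Xlt n) 0 3 0 3 = MS (Alt n) 3 0 3 0 := (MS_ups_lt n 3 0 3 0).symm
  have h29 : MS (Xeq n) 0 3 0 3 = MS (Aeq n) 3 0 3 0 := (MS_ups_eq n 3 0 3 0).symm
  have h30 : MS (Agt n) 0 3 0 3 + MS (Alt n) 0 3 0 3 + MS (Aeq n) 0 3 0 3 = MS (Xgt n) 0 3 0 3 + MS (Xlt n) 0 3 0 3 + MS (Xeq n) 0 3 0 3 := (MS_split_A n 0 3 0 3).symm.trans (MS_split_X n 0 3 0 3)
  have h31 : MS (Aeq n) 0 3 0 3 = (-1/42 : ℚ) * DS n 0 1 + (1/60 : ℚ) * DS n 0 3 + (1/140 : ℚ) * DS n 0 7 := by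
    simp only [MS]
    rw [sum_diag_A n (fun (p : ℕ×ℕ×ℕ×ℕ) => (p.1:ℚ)^0 * (p.2.1:ℚ)^3 * (p.2.2.1:ℚ)^0 * (p.2.2.2:ℚ)^3)]
    rw [Finset.sum_congr rfl (g := fun (d : ℕ) => (-1/42 : ℚ) * ((d:ℚ)^0 * ((n/d : ℕ):ℚ)^1) + (1/60 : ℚ) * ((d:ℚ)^0 * ((n/d : ℕ):ℚ)^3) + (1/140 : ℚ) * ((d:ℚ)^0 * ((n/d : ℕ):ℚ)^7)) ?_]
    · simp only [Finset.sum_add_distrib, ← Finset.mul_sum, DS]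
    · intro d hd
      have h0 : n ≠ 0 := (Nat.mem_divisors.mp hd).2
      have hd1 : 0 < d := Nat.pos_of_mem_divisors hd
      have hm : 1 ≤ n / d := Nat.div_pos (Nat.le_of_dvd (Nat.pos_of_ne_zero h0) (Nat.mem_divisors.mp hd).1) hd1
      rw [Finset.sum_congr rfl (g := fun (x : ℕ) => (d:ℚ)^0 * ((x:ℚ)^3 * ((n/d - x : ℕ):ℚ)^3)) ?_]
      · rw [← Finset.mul_sum, fa_3_3 (n/d) hm]
        ring
      · intro x hx
        dsimp only
        ring
  have h32 : MS (Xeq n) 0 3 0 3 = (-1 : ℚ) * DS n 6 0 + (1 : ℚ) * DS n 6 1 := by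
    simp only [MS]
    rw [sum_diag_X n (fun (p : ℕ×ℕ×ℕ×ℕ) => (p.1:ℚ)^0 * (p.2.1:ℚ)^3 * (p.2.2.1:ℚ)^0 * (p.2.2.2:ℚ)^3)]
    rw [Finset.sum_congr rfl (g := fun (d : ℕ) => (-1 : ℚ) * ((d:ℚ)^6 * ((n/d : ℕ):ℚ)^0) + (1 : ℚ) * ((d:ℚ)^6 * ((n/d : ℕ):ℚ)^1)) ?_]
    · simp only [Finset.sum_add_distrib, ← Finset.mul_sum, DS]
    · intro d hd
      have h0 : n ≠ 0 := (Nat.mem_divisors.mp hd).2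
      have hd1 : 0 < d := Nat.pos_of_mem_divisors hd
      have hm : 1 ≤ n / d := Nat.div_pos (Nat.le_of_dvd (Nat.pos_of_ne_zero h0) (Nat.mem_divisors.mp hd).1) hd1
      rw [Finset.sum_congr rfl (g := fun (x : ℕ) => (d:ℚ)^6 * ((x:ℚ)^0 * ((n/d - x : ℕ):ℚ)^0)) ?_]
      · rw [← Finset.mul_sum, fa_0_0 (n/d) hm]
        ring
      · intro x hx
        dsimp only
        ring
  have h33 : MS (Agt n) 0 4 0 2 = (1 : ℚ) * MS (Xlt n) 0 6 0 0 + (-2 : ℚ) * MS (Xlt n) 0 5 0 1 + (1 : ℚ) * MS (Xlt n) 0 4 0 2 := by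
    simp only [MS]
    rw [sum_bij_AX n (fun (p : ℕ×ℕ×ℕ×ℕ) => (p.1:ℚ)^0 * (p.2.1:ℚ)^4 * (p.2.2.1:ℚ)^0 * (p.2.2.2:ℚ)^2)]
    rw [Finset.sum_congr rfl (g := fun (p : ℕ×ℕ×ℕ×ℕ) => (1 : ℚ) * ((p.1:ℚ)^0 * (p.2.1:ℚ)^6 * (p.2.2.1:ℚ)^0 * (p.2.2.2:ℚ)^0) + (-2 : ℚ) * ((p.1:ℚ)^0 * (p.2.1:ℚ)^5 * (p.2.2.1:ℚ)^0 * (p.2.2.2:ℚ)^1) + (1 : ℚ) * ((p.1:ℚ)^0 * (p.2.1:ℚ)^4 * (p.2.2.1:ℚ)^0 * (p.2.2.2:ℚ)^2)) ?_]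
    · simp only [Finset.sum_add_distrib, ← Finset.mul_sum]
    · rintro ⟨a,x,b,y⟩ hp
      rw [Xlt, Finset.mem_filter] at hp
      have hxy : x ≤ y := le_of_lt hp.2
      dsimp only
      rw [Nat.cast_sub hxy]
      push_cast
      ring
  have h34 : MS (Agt n) 0 4 0 2 = MS (Alt n) 0 2 0 4 := MS_tau_gt n 0 4 0 2
  have h35 : MS (Agt n) 0 5 0 1 = (-1 : ℚ) * MS (Xlt n) 0 6 0 0 + (1 : ℚ) * MS (Xlt n) 0 5 0 1 := by
    simp only [MS]
    rw [sum_bij_AX n (fun (p : ℕ×ℕ×ℕ×ℕ) => (p.1:ℚ)^0 * (p.2.1:ℚ)^5 * (p.2.2.1:ℚ)^0 * (p.2.2.2:ℚ)^1)]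
    rw [Finset.sum_congr rfl (g := fun (p : ℕ×ℕ×ℕ×ℕ) => (-1 : ℚ) * ((p.1:ℚ)^0 * (p.2.1:ℚ)^6 * (p.2.2.1:ℚ)^0 * (p.2.2.2:ℚ)^0) + (1 : ℚ) * ((p.1:ℚ)^0 * (p.2.1:ℚ)^5 * (p.2.2.1:ℚ)^0 * (p.2.2.2:ℚ)^1)) ?_]
    · simp only [Finset.sum_add_distrib, ← Finset.mul_sum]
    · rintro ⟨a,x,b,y⟩ hp
      rw [Xlt, Finset.mem_filter] at hp
      have hxy : x ≤ y := le_of_lt hp.2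
      dsimp only
      rw [Nat.cast_sub hxy]
      push_cast
      ring
  have h36 : MS (Agt n) 0 5 0 1 = MS (Alt n) 0 1 0 5 := MS_tau_gt n 0 5 0 1
  have hsp0 := MS_split_A n 1 0 5 0
  have hsp1 := MS_split_A n 3 0 3 0
  linear_combination (24 : ℚ) * h0 + (480 : ℚ) * h1 + (504 : ℚ) * h2 + (-1008 : ℚ) * h3 + (2016 : ℚ) * h4 + (-2016 : ℚ) * h5 + (2016 : ℚ) * h6 + (-2016 : ℚ) * h7 + (-2016 : ℚ) * h8 + (2016 : ℚ) * h9 + (-2016 : ℚ) * h10 + (6048 : ℚ) * h11 + (6048 : ℚ) * h12 + (-12096 : ℚ) * h13 + (-12096 : ℚ) * h14 + (-12096 : ℚ) * h15 + (-6048 : ℚ) * h16 + (6048 : ℚ) * h17 + (6048 : ℚ) * h18 + (-23760 : ℚ) * h19 + (23760 : ℚ) * h20 + (23760 : ℚ) * h21 + (-23760 : ℚ) * h22 + (23760 : ℚ) * h23 + (-57600 : ℚ) * h24 + (28800 : ℚ) * h25 + (-28800 : ℚ) * h26 + (57600 : ℚ) * h27 + (57600 : ℚ) * h28 + (57600 :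 ℚ) * h29 + (28800 : ℚ) * h30 + (-28800 : ℚ) * h31 + (-28800 : ℚ) * h32 + (-23760 : ℚ) * h33 + (23760 : ℚ) * h34 + (6048 : ℚ) * h35 + (-6048 : ℚ) * h36 + (12096 : ℚ) * hsp0 + (-57600 : ℚ) * hsp1


end

-- ===== Part C =====
open PowerSeries Finset

noncomputable section

lemma coeff_E2 (n : ℕ) (hn : n ≠ 0) : coeff (R := ℚ) n E2 = -24 * (sigma' 1 n : ℚ) := by
  simp [E2, coeff_mk, if_neg hn]

lemma coeff_E4 (n : ℕ) (hn : n ≠ 0) : coeff (R := ℚ) n E4 = 240 * (sigma' 3 n : ℚ) := by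
  simp [E4, coeff_mk, if_neg hn]

lemma coeff_E6 (n : ℕ) (hn : n ≠ 0) : coeff (R := ℚ) n E6 = -504 * (sigma' 5 n : ℚ) := by
  simp [E6, coeff_mk, if_neg hn]

lemma coeff_zero_E2 : coeff (R := ℚ) 0 E2 = 1 := by simp [E2, coeff_mk]
lemma coeff_zero_E4 : coeff (R := ℚ) 0 E4 = 1 := by simp [E4, coeff_mk]
lemma coeff_zero_E6 : coeff (R := ℚ) 0 E6 = 1 := by simp [E6, coeff_mk]
lemma cc_E2 : constantCoeff (R := ℚ) E2 = 1 := by rw [← coeff_zero_eq_constantCoeff_apply]; exact coeff_zero_E2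
lemma cc_E4 : constantCoeff (R := ℚ) E4 = 1 := by rw [← coeff_zero_eq_constantCoeff_apply]; exact coeff_zero_E4
lemma cc_E6 : constantCoeff (R := ℚ) E6 = 1 := by rw [← coeff_zero_eq_constantCoeff_apply]; exact coeff_zero_E6
lemma Dq_constantCoeff {R : Type*} [CommRing R] (f : PowerSeries R) :
    constantCoeff (R := R) (Dq f) = 0 := by
  have : coeff (R := R) 0 (Dq f) = 0 := by simp [Dq, coeff_mk]
  rwa [coeff_zero_eq_constantCoeff_apply] at this

lemma coeff_mul_split (f g : PowerSeries ℚ) (n : ℕ) (hn : 1 ≤ n) :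
    coeff (R := ℚ) n (f * g) = coeff (R := ℚ) 0 f * coeff (R := ℚ) n g
      + (∑ k ∈ Finset.Ico 1 n, coeff (R := ℚ) k f * coeff (R := ℚ) (n - k) g)
      + coeff (R := ℚ) n f * coeff (R := ℚ) 0 g := by
  rw [PowerSeries.coeff_mul, Finset.Nat.sum_antidiagonal_eq_sum_range_succ_mk,
    Finset.sum_range_succ, Finset.range_eq_Ico, Finset.sum_eq_sum_Ico_succ_bot (by omega)]
  first
  | (simp only [Nat.sub_zero, Nat.sub_self, zero_add]; ring)
  | simp only [Nat.sub_zero, Nat.sub_self, zero_add]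

/-- Ramanujan: 3 D(E₄) = E₂E₄ − E₆ -/
lemma ram4 : (3 : PowerSeries ℚ) * Dq E4 = E2 * E4 - E6 := by
  rw [show (3 : PowerSeries ℚ) = C (R := ℚ) 3 from (map_ofNat (C (R := ℚ)) 3).symm]
  ext n
  rw [PowerSeries.coeff_C_mul, map_sub]
  rcases Nat.eq_zero_or_pos n with h0 | h1
  · subst h0
    simp only [coeff_zero_eq_constantCoeff_apply, map_mul, map_sub, Dq_constantCoeff,
      cc_E2, cc_E4, cc_E6, constantCoeff_C]
    norm_num
  · rw [coeff_mul_split E2 E4 n h1, coeff_zero_E2, coeff_zero_E4]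
    simp only [Dq, coeff_mk]
    rw [coeff_E2 n (by omega), coeff_E4 n (by omega), coeff_E6 n (by omega)]
    have hmid : ∑ k ∈ Finset.Ico 1 n, coeff (R := ℚ) k E2 * coeff (R := ℚ) (n - k) E4
        = -5760 * ∑ k ∈ Finset.Ico 1 n, (sigma' 1 k : ℚ) * (sigma' 3 (n - k) : ℚ) := by
      rw [Finset.mul_sum]
      refine Finset.sum_congr rfl (fun k hk => ?_)
      rw [Finset.mem_Ico] at hk
      rw [coeff_E2 k (by omega), coeff_E4 (n - k) (by omega)]
      ring
    rw [hmid, W_eq_MS n 1 3 h1]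
    have hc := conv1 n
    rw [DS_sigma n 5, DS_sigma n 3, DS_sigma n 1,
      show (4 : ℕ) = 3 + 1 from rfl, DS_nsigma n 3] at hc
    linear_combination (24 : ℚ) * hc

/-- Ramanujan: 2 D(E₆) = E₂E₆ − E₄² -/
lemma ram6 : (2 : PowerSeries ℚ) * Dq E6 = E2 * E6 - E4 ^ 2 := by
  rw [show (2 : PowerSeries ℚ) = C (R := ℚ) 2 from (map_ofNat (C (R := ℚ)) 2).symm]
  ext n
  rw [PowerSeries.coeff_C_mul, map_sub]
  rcases Nat.eq_zero_or_pos n with h0 | h1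
  · subst h0
    simp only [coeff_zero_eq_constantCoeff_apply, map_mul, map_sub, map_pow, Dq_constantCoeff,
      cc_E2, cc_E4, cc_E6, constantCoeff_C]
    norm_num
  · rw [sq, coeff_mul_split E2 E6 n h1, coeff_mul_split E4 E4 n h1,
      coeff_zero_E2, coeff_zero_E4, coeff_zero_E6]
    simp only [Dq, coeff_mk]
    rw [coeff_E2 n (by omega), coeff_E4 n (by omega), coeff_E6 n (by omega)]
    have hmid1 : ∑ k ∈ Finset.Ico 1 n, coeff (R := ℚ) k E2 * coeff (R := ℚ) (n - k) E6
        = 12096 * ∑ k ∈ Finset.Ico 1 n, (sigma' 1 k : ℚ) * (sigma' 5 (n - k) : ℚ) := by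
      rw [Finset.mul_sum]
      refine Finset.sum_congr rfl (fun k hk => ?_)
      rw [Finset.mem_Ico] at hk
      rw [coeff_E2 k (by omega), coeff_E6 (n - k) (by omega)]
      ring
    have hmid2 : ∑ k ∈ Finset.Ico 1 n, coeff (R := ℚ) k E4 * coeff (R := ℚ) (n - k) E4
        = 57600 * ∑ k ∈ Finset.Ico 1 n, (sigma' 3 k : ℚ) * (sigma' 3 (n - k) : ℚ) := by
      rw [Finset.mul_sum]
      refine Finset.sum_congr rfl (fun k hk => ?_)
      rw [Finset.mem_Ico] at hk
      rw [coeff_E4 k (by omega), coeff_E4 (n - k) (by omega)]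
      ring
    rw [hmid1, hmid2, W_eq_MS n 1 5 h1, W_eq_MS n 3 3 h1]
    have hc := conv2 n
    rw [DS_sigma n 5, DS_sigma n 3, DS_sigma n 1,
      show (6 : ℕ) = 5 + 1 from rfl, DS_nsigma n 5] at hc
    linear_combination (-1 : ℚ) * hc

end

-- ===== Part C2: derivative consequences =====
noncomputable section
open PowerSeries

lemma Dq_ofNat' {R : Type*} [CommRing R] (n : ℕ) [n.AtLeastTwo] :
    Dq (OfNat.ofNat n : PowerSeries R) = 0 := by
  rw [← map_ofNat (C (R := R)) n]; exact Dq_C _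

lemma dDelta : Dq Δ' = E2 * Δ' := by
  rw [Δ', Dq_mul, Dq_C, Dq_sub, Dq_pow, Dq_pow]
  norm_num
  linear_combination (C (R := ℚ) (1/1728) * E4 ^ 2) * ram4 - (C (R := ℚ) (1/1728) * E6) * ram6

variable (S : PowerSeries ℚ) (hS1 : constantCoeff (R := ℚ) S = 1) (hS2 : PowerSeries.X * S ^ 2 = Δ')

lemma S_ne (hS1 : constantCoeff (R := ℚ) S = 1) : S ≠ 0 := by
  intro h; rw [h] at hS1; simp at hS1

lemma hdS (hS1 : constantCoeff (R := ℚ) S = 1) (hS2 : PowerSeries.X * S ^ 2 = Δ') :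
    (2 : PowerSeries ℚ) * Dq S = (E2 - 1) * S := by
  have hXS : (PowerSeries.X : PowerSeries ℚ) * S ≠ 0 :=
    mul_ne_zero PowerSeries.X_ne_zero (S_ne S hS1)
  have h := congrArg Dq hS2
  rw [Dq_mul, Dq_X, Dq_pow, dDelta, ← hS2] at h
  norm_num at h
  refine mul_left_cancel₀ hXS ?_
  linear_combination h

lemma hSinv (hS1 : constantCoeff (R := ℚ) S = 1) : S * S⁻¹ = 1 :=
  PowerSeries.mul_inv_cancel S (by rw [hS1]; exact one_ne_zero)

lemma hdSi (hS1 : constantCoeff (R := ℚ) S = 1) (hS2 : PowerSeries.X * S ^ 2 = Δ') :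
    (2 : PowerSeries ℚ) * Dq S⁻¹ = (1 - E2) * S⁻¹ := by
  have hA := congrArg Dq (hSinv S hS1)
  rw [Dq_mul, Dq_one] at hA
  refine mul_left_cancel₀ (S_ne S hS1) ?_
  linear_combination (2 : PowerSeries ℚ) * hA - S⁻¹ * hdS S hS1 hS2

lemma ram6d : (2 : PowerSeries ℚ) * Dq (Dq E6)
    = Dq E2 * E6 + E2 * Dq E6 - 2 * E4 * Dq E4 := by
  have h := congrArg Dq ram6
  rw [Dq_mul, Dq_ofNat', Dq_sub, Dq_mul, Dq_pow] at h
  norm_num at h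
  linear_combination h

lemma hdSid (hS1 : constantCoeff (R := ℚ) S = 1) (hS2 : PowerSeries.X * S ^ 2 = Δ') :
    (2 : PowerSeries ℚ) * Dq (Dq S⁻¹)
      = (0 - Dq E2) * S⁻¹ + (1 - E2) * Dq S⁻¹ := by
  have h := congrArg Dq (hdSi S hS1 hS2)
  rw [Dq_mul, Dq_ofNat', Dq_mul, Dq_sub, Dq_one] at h
  linear_combination h

end

-- ===== Part D: the main theorem =====
noncomputable section
open PowerSeries

abbrev Aq := PowerSeries (RatFunc ℚ)

lemma ofNat_ne_zero_ratfunc (n : ℕ) [n.AtLeastTwo] (hq : (OfNat.ofNat n : ℚ) ≠ 0) :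
    (OfNat.ofNat n : RatFunc ℚ) ≠ 0 := by
  rw [show (OfNat.ofNat n : RatFunc ℚ) = algebraMap ℚ (RatFunc ℚ) (OfNat.ofNat n) from
    (map_ofNat _ n).symm]
  intro h
  exact hq ((algebraMap ℚ (RatFunc ℚ)).injective (h.trans (map_zero _).symm))

lemma iota_Dq (f : PowerSeries ℚ) : ι (Dq f) = Dq (ι f) := (Dq_map _ _).symm

section PsiLemmas
variable (σ : RatFunc ℚ →ₐ[ℚ] RatFunc ℚ)

lemma psi_add (f g : Aq) : Ψop σ (f + g) = Ψop σ f + Ψop σ g := map_add _ _ _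
lemma psi_mul (f g : Aq) : Ψop σ (f * g) = Ψop σ f * Ψop σ g := map_mul _ _ _
lemma psi_sub (f g : Aq) : Ψop σ (f - g) = Ψop σ f - Ψop σ g := map_sub _ _ _
lemma psi_one : Ψop σ (1 : Aq) = 1 := map_one _
lemma psi_X : Ψop σ (PowerSeries.X : Aq) = PowerSeries.X := PowerSeries.map_X _
lemma psi_C (r : RatFunc ℚ) :
    Ψop σ (PowerSeries.C (R := RatFunc ℚ) r) = PowerSeries.C (R := RatFunc ℚ) (σ r) :=
  PowerSeries.map_C _ _
lemma psi_iota (f : PowerSeries ℚ) : Ψop σ (ι f) = ι f := by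
  ext n
  simp only [Ψop, ι, PowerSeries.coeff_map]
  exact σ.commutes _
lemma psi_Dq (f : Aq) : Ψop σ (Dq f) = Dq (Ψop σ f) := (Dq_map _ _).symm

end PsiLemmas

theorem commutation_rule_D_Psimu' (σ : RatFunc ℚ →ₐ[ℚ] RatFunc ℚ)
    (hσ : σ RatFunc.X = RatFunc.X + 1)
    (S : PowerSeries ℚ)
    (hS1 : PowerSeries.constantCoeff (R := ℚ) S = 1)
    (hS2 : PowerSeries.X * S ^ 2 = Δ')
    (m : RatFunc ℚ) (G : PowerSeries (RatFunc ℚ)) :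
    Dcal' (Psimu σ S m G) - Psimu σ S m (Dcal G)
      = PowerSeries.C (R := RatFunc ℚ) m * ι E4
          * (PowerSeries.C (R := RatFunc ℚ) (RatFunc.X + 1) * G
              - PowerSeries.C (R := RatFunc ℚ) (1/12) * Fcal σ S G) := by
  -- σ-evaluation facts
  have e1 : σ (RatFunc.X ^ 2 / 4) = (RatFunc.X + 1) ^ 2 / 4 := by
    rw [map_div₀, map_pow, hσ, map_ofNat]
  have e2 : σ ((RatFunc.X + 1) ^ 2 / 4) = (RatFunc.X + 2) ^ 2 / 4 := by
    rw [map_div₀, map_pow, map_add, hσ, map_one, map_ofNat]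
    ring
  have e3 : σ (RatFunc.X + 1) = RatFunc.X + 2 := by
    rw [map_add, hσ, map_one]; ring
  -- ι-mapped differential relations
  have i1 : (3 : Aq) * Dq (ι E4) = ι E2 * ι E4 - ι E6 := by
    simpa only [map_mul, map_sub, map_ofNat, iota_Dq] using congrArg ι ram4
  have i2 : (2 : Aq) * Dq (ι E6) = ι E2 * ι E6 - ι E4 ^ 2 := by
    simpa only [map_mul, map_sub, map_pow, map_ofNat, iota_Dq] using congrArg ι ram6
  have i3 : (2 : Aq) * Dq (Dq (ι E6))
      = Dq (ι E2) * ι E6 + ι E2 * Dq (ι E6) - 2 * ι E4 * Dq (ι E4) := by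
    simpa only [map_mul, map_add, map_sub, map_ofNat, iota_Dq] using congrArg ι ram6d
  have i4 : (2 : Aq) * Dq (ι S⁻¹) = (1 - ι E2) * ι S⁻¹ := by
    simpa only [map_mul, map_sub, map_one, map_ofNat, iota_Dq] using
      congrArg ι (hdSi S hS1 hS2)
  have i5 : (2 : Aq) * Dq (Dq (ι S⁻¹))
      = (0 - Dq (ι E2)) * ι S⁻¹ + (1 - ι E2) * Dq (ι S⁻¹) := by
    simpa only [map_mul, map_add, map_sub, map_one, map_zero, map_ofNat, iota_Dq] using
      congrArg ι (hdSid S hS1 hS2)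
  -- constant conversions
  have rc1 : (4 : Aq) * PowerSeries.C (R := RatFunc ℚ) (RatFunc.X ^ 2 / 4)
      = PowerSeries.C (R := RatFunc ℚ) RatFunc.X ^ 2 := by
    rw [show (4 : Aq) = PowerSeries.C (R := RatFunc ℚ) (4 : RatFunc ℚ) from (map_ofNat _ _).symm,
      ← map_mul, ← map_pow]
    congr 1
    rw [mul_comm, div_mul_cancel₀ _ (ofNat_ne_zero_ratfunc 4 (by norm_num))]
  have rc2 : (4 : Aq) * PowerSeries.C (R := RatFunc ℚ) ((RatFunc.X + 1) ^ 2 / 4)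
      = (PowerSeries.C (R := RatFunc ℚ) RatFunc.X + 1) ^ 2 := by
    rw [show (4 : Aq) = PowerSeries.C (R := RatFunc ℚ) (4 : RatFunc ℚ) from (map_ofNat _ _).symm,
      ← map_mul, ← map_one (PowerSeries.C (R := RatFunc ℚ)), ← map_add, ← map_pow]
    congr 1
    rw [mul_comm, div_mul_cancel₀ _ (ofNat_ne_zero_ratfunc 4 (by norm_num))]
  have rc3 : (4 : Aq) * PowerSeries.C (R := RatFunc ℚ) ((RatFunc.X + 2) ^ 2 / 4)
      = (PowerSeries.C (R := RatFunc ℚ) RatFunc.X + 2) ^ 2 := by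
    rw [show (4 : Aq) = PowerSeries.C (R := RatFunc ℚ) (4 : RatFunc ℚ) from (map_ofNat _ _).symm,
      ← map_mul,
      show ((2 : Aq)) = PowerSeries.C (R := RatFunc ℚ) (2 : RatFunc ℚ) from (map_ofNat _ _).symm,
      ← map_add, ← map_pow]
    congr 1
    rw [mul_comm, div_mul_cancel₀ _ (ofNat_ne_zero_ratfunc 4 (by norm_num))]
  have rc4 : (12 : Aq) * PowerSeries.C (R := RatFunc ℚ) ((1 : RatFunc ℚ)/12) = 1 := by
    rw [show (12 : Aq) = PowerSeries.C (R := RatFunc ℚ) (12 : RatFunc ℚ) from (map_ofNat _ _).symm,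
      ← map_mul, ← map_one (PowerSeries.C (R := RatFunc ℚ))]
    congr 1
    rw [mul_comm, div_mul_cancel₀ _ (ofNat_ne_zero_ratfunc 12 (by norm_num))]
  have k1 : PowerSeries.C (R := RatFunc ℚ) (RatFunc.X + 1)
      = PowerSeries.C (R := RatFunc ℚ) RatFunc.X + 1 := by rw [map_add, map_one]
  have k2 : PowerSeries.C (R := RatFunc ℚ) (RatFunc.X + 2)
      = PowerSeries.C (R := RatFunc ℚ) RatFunc.X + 2 := by rw [map_add, map_ofNat]
  have k3 : PowerSeries.C (R := RatFunc ℚ) (6 * (RatFunc.X + 1))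
      = 6 * (PowerSeries.C (R := RatFunc ℚ) RatFunc.X + 1) := by
    rw [map_mul, map_add, map_one, map_ofNat]
  have k4 : PowerSeries.C (R := RatFunc ℚ) (6 * RatFunc.X + 5)
      = 6 * PowerSeries.C (R := RatFunc ℚ) RatFunc.X + 5 := by
    rw [map_add, map_mul, map_ofNat, map_ofNat]
  have k5 : PowerSeries.C (R := RatFunc ℚ) (12 : RatFunc ℚ) = (12 : Aq) := map_ofNat _ _
  have k6 : ι (E2 * E4) = ι E2 * ι E4 := map_mul _ _ _
  have h12A : (12 : Aq) ≠ 0 := by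
    rw [show (12 : Aq) = PowerSeries.C (R := RatFunc ℚ) (12 : RatFunc ℚ) from (map_ofNat _ _).symm]
    intro h
    exact (ofNat_ne_zero_ratfunc 12 (by norm_num))
      (by simpa using congrArg (PowerSeries.constantCoeff (R := RatFunc ℚ)) h)
  -- expansion
  simp only [Dcal', Dcal, Psimu, Fcal, Xc]
  simp only [psi_add, psi_mul, psi_sub, psi_one, psi_X, psi_C, psi_iota, psi_Dq]
  simp only [hσ, e1, e2, e3]
  simp only [k1, k2, k3, k4, k5, k6]
  simp only [Dq_add, Dq_sub, Dq_mul, Dq_X, Dq_C, Dq_one, Dq_zero, Dq_ofNat']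
  apply mul_left_cancel₀ h12A
  linear_combination ((6 : Aq) * (PowerSeries.C (R := RatFunc ℚ) m) * (Ψop σ G) * (ι S⁻¹)) * i3 + ((6 : Aq) * (PowerSeries.C (R := RatFunc ℚ) m) * (ι E6) * (Ψop σ G)) * i5 + ((12 : Aq) * (PowerSeries.C (R := RatFunc ℚ) m) * (Dq (Ψop σ G)) * (ι S⁻¹) + (12 : Aq) * (PowerSeries.C (R := RatFunc ℚ) m) * (Dq (ι S⁻¹)) * (Ψop σ G) + (3 : Aq) * (PowerSeries.C (R := RatFunc ℚ) m) * (ι E2) * (Ψop σ G) * (ι S⁻¹) + (6 : Aq) * (PowerSeries.C (R := RatFunc ℚ) m) * (Ψop σ G) * (ι S⁻¹) * (PowerSeries.C (R := RatFunc ℚ) RatFunc.X)) * i2 + ((12 : Aq) * (PowerSeries.C (R := RatFunc ℚ) m) * (Dq (Ψop σ G)) * (ι E6) + (3 : Aq) * (PowerSeries.C (R := RatFunc ℚ) m) * (ι E2) * (ι E6) * (Ψop σ G) + (-6 : Aq) * (PowerSeries.C (R := RatFunc ℚ) m) * (ι E4) * (ι E4) * (Ψop σ G) + (3 : Aq) *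 (PowerSeries.C (R := RatFunc ℚ) m) * (ι E6) * (Ψop σ G) + (6 : Aq) * (PowerSeries.C (R := RatFunc ℚ) m) * (ι E6) * (Ψop σ G) * (PowerSeries.C (R := RatFunc ℚ) RatFunc.X)) * i4 + ((-4 : Aq) * (PowerSeries.C (R := RatFunc ℚ) m) * (ι E4) * (Ψop σ G) * (ι S⁻¹)) * i1 + ((-3 : Aq) * G * (PowerSeries.C (R := RatFunc ℚ) m) * (ι E4) + (3 : Aq) * (PowerSeries.C (R := RatFunc ℚ) m) * (ι E6) * (Ψop σ G) * (ι S⁻¹) + (3 : Aq) * (Ψop σ (Ψop σ G)) * (PowerSeries.X : Aq)) * rc1 + ((3 : Aq) * (PowerSeries.C (R := RatFunc ℚ) m) * (ι E4) * (ι E6) * (Ψop σ G) * (ι S⁻¹) + (-3 : Aq) * (PowerSeries.C (R := RatFunc ℚ) m) * (ι E6) * (Ψop σ G) * (ι S⁻¹)) * rc2 + ((3 : Aq) * G * (PowerSeries.C (R := RatFunc ℚ) m) * (ι E4) + (-3 : Aq) * (PowerSeries.C (R := RatFunc ℚ) m) * (ι E4) * (ι E6) * (Ψop σ G) * (ι S⁻¹)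 + (-3 : Aq) * (Ψop σ (Ψop σ G)) * (PowerSeries.X : Aq)) * rc3 + ((12 : Aq) * (PowerSeries.C (R := RatFunc ℚ) m) * (Dq (Ψop σ G)) * (ι E4) * (ι E4) * (ι S⁻¹) + (PowerSeries.C (R := RatFunc ℚ) m) * (ι E2) * (ι E4) * (ι E4) * (Ψop σ G) * (ι S⁻¹) + (6 : Aq) * (PowerSeries.C (R := RatFunc ℚ) m) * (ι E4) * (ι E4) * (Ψop σ G) * (ι S⁻¹) + (6 : Aq) * (PowerSeries.C (R := RatFunc ℚ) m) * (ι E4) * (ι E4) * (Ψop σ G) * (ι S⁻¹) * (PowerSeries.C (R := RatFunc ℚ) RatFunc.X) + (5 : Aq) * (PowerSeries.C (R := RatFunc ℚ) m) * (ι E4) * (ι E6) * (Ψop σ G) * (ι S⁻¹) + (6 : Aq) * (PowerSeries.C (R := RatFunc ℚ) m) * (ι E4) * (ι E6) * (Ψop σ G) * (ι S⁻¹) * (PowerSeries.C (R := RatFunc ℚ) RatFunc.X)) * rc4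

/-- `𝒟'∘Ψ_μ − Ψ_μ∘𝒟 = μ·E₄·((X+1) − ℱ/12)`. -/
theorem commutation_rule_D_Psimu (σ : RatFunc ℚ →ₐ[ℚ] RatFunc ℚ)
    (hσ : σ RatFunc.X = RatFunc.X + 1)
    (S : PowerSeries ℚ)
    (hS1 : PowerSeries.constantCoeff (R := ℚ) S = 1)
    (hS2 : PowerSeries.X * S ^ 2 = Δ')
    (m : RatFunc ℚ) (G : PowerSeries (RatFunc ℚ)) :
    Dcal' (Psimu σ S m G) - Psimu σ S m (Dcal G)
      = PowerSeries.C (R := RatFunc ℚ) m * ι E4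
          * (PowerSeries.C (R := RatFunc ℚ) (RatFunc.X + 1) * G
              - PowerSeries.C (R := RatFunc ℚ) (1/12) * Fcal σ S G) := by
    exact commutation_rule_D_Psimu' σ hσ S hS1 hS2 m G
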